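/- arXiv:2406.09013 — 2 statements merged into one kernel-verified Lean document; each statement's English description precedes it below -/
import Mathlib

section
/- For a Banach lattice E, if every order interval of E is |σ|(E,E′)-totally bounded, then every disjointly weakly compact subset of E is |σ|(E,E′)-totally bounded. -/
open Filter Topology ZeroAtInfty Set Bornology

noncomputable section

section Defs

variable {E F X : Type*}

/-- Two elements of a lattice group are (lattice) disjoint. -/
def LatDisjoint [Lattice E] [AddCommGroup E] (x y : E) : Prop := |x| ⊓ |y| = 0

/-- A pairwise disjoint sequence. -/
def DisjointSeq [Lattice E] [AddCommGroup E] (x : ℕ → E) : Prop :=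
  ∀ m n, m ≠ n → LatDisjoint (x m) (x n)

variable [NormedAddCommGroup X] [NormedSpace ℝ X]

/-- A weakly null sequence in a normed space. -/
def WeaklyNull (x : ℕ → X) : Prop :=
  ∀ f : X →L[ℝ] ℝ, Tendsto (fun n => f (x n)) atTop (𝓝 0)

/-- A weakly Cauchy sequence. -/
def WeaklyCauchy (x : ℕ → X) : Prop :=
  ∀ f : X →L[ℝ] ℝ, ∃ l : ℝ, Tendsto (fun n => f (x n)) atTop (𝓝 l)

/-- A weakly precompact set: every sequence has a weakly Cauchy subsequence. -/
def WeaklyPrecompactSet (A : Set X) : Prop :=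
  ∀ x : ℕ → X, (∀ n, x n ∈ A) → ∃ φ : ℕ → ℕ, StrictMono φ ∧ WeaklyCauchy (x ∘ φ)

/-- A relatively weakly compact set: closure in the weak topology is compact. -/
def RelWeaklyCompact (A : Set X) : Prop :=
  IsCompact (closure ((toWeakSpace ℝ X) '' A))

/-- A weakly sequentially complete space. -/
def WeaklySeqComplete (X : Type*) [NormedAddCommGroup X] [NormedSpace ℝ X] : Prop :=
  ∀ x : ℕ → X, WeaklyCauchy x → ∃ l : X, ∀ f : X →L[ℝ] ℝ,
    Tendsto (fun n => f (x n)) atTop (𝓝 (f l))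

/-- A weak*-null sequence of functionals. -/
def WeakStarNull (f : ℕ → X →L[ℝ] ℝ) : Prop :=
  ∀ x : X, Tendsto (fun n => f n x) atTop (𝓝 0)

/-- A sequence of functionals converges uniformly to zero on a set `A`. -/
def UnifZeroOn (f : ℕ → X →L[ℝ] ℝ) (A : Set X) : Prop :=
  ∀ ε > (0:ℝ), ∃ N : ℕ, ∀ n ≥ N, ∀ x ∈ A, |f n x| < ε

/-- A limited set. -/
def LimitedSet (A : Set X) : Prop :=
  IsBounded A ∧ ∀ f : ℕ → X →L[ℝ] ℝ, WeakStarNull f → UnifZeroOn f A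

variable [NormedAddCommGroup E] [Lattice E] [HasSolidNorm E] [IsOrderedAddMonoid E] [NormedSpace ℝ E]
  [NormedAddCommGroup F] [Lattice F] [HasSolidNorm F] [IsOrderedAddMonoid F] [NormedSpace ℝ F]

/-- An almost Dunford–Pettis operator: sends disjoint weakly null sequences to norm null ones. -/
def AlmostDP (T : E →L[ℝ] X) : Prop :=
  ∀ x : ℕ → E, DisjointSeq x → WeaklyNull x → Tendsto (fun n => ‖T (x n)‖) atTop (𝓝 0)

/-- A Dunford–Pettis operator: sends weakly null sequences to norm null ones. -/
def DunfordPettisOp (T : E →L[ℝ] X) : Prop :=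
  ∀ x : ℕ → E, WeaklyNull x → Tendsto (fun n => ‖T (x n)‖) atTop (𝓝 0)

/-- An almost L-set in the dual: disjoint weakly null sequences of `E` converge to zero
uniformly on `B`. -/
def AlmostLSet (B : Set (E →L[ℝ] ℝ)) : Prop :=
  IsBounded B ∧ ∀ x : ℕ → E, DisjointSeq x → WeaklyNull x →
    ∀ ε > (0:ℝ), ∃ N : ℕ, ∀ n ≥ N, ∀ f ∈ B, |f (x n)| < ε

/-- An almost L-sequence in the dual. -/
def AlmostLSeq (f : ℕ → E →L[ℝ] ℝ) : Prop := AlmostLSet (Set.range f)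

/-- A super weakly precompact set: a bounded set mapped to a relatively compact subset of `c₀`
by every almost Dunford–Pettis operator. -/
def SuperWeaklyPrecompact (A : Set E) : Prop :=
  IsBounded A ∧ ∀ T : E →L[ℝ] C₀(ℕ, ℝ), AlmostDP T → IsCompact (closure (T '' A))

/-- The solid hull of a set in a Banach lattice. -/
def SolidHull (A : Set E) : Set E := {y | ∃ x ∈ A, |y| ≤ |x|}

/-- An L-weakly compact set. -/
def LWeaklyCompact (A : Set E) : Prop :=
  IsBounded A ∧ ∀ x : ℕ → E, (∀ n, x n ∈ SolidHull A) → DisjointSeq x →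
    Tendsto (fun n => ‖x n‖) atTop (𝓝 0)

/-- A disjointly weakly compact set. -/
def DisjointlyWeaklyCompact (A : Set E) : Prop :=
  IsBounded A ∧ ∀ x : ℕ → E, (∀ n, x n ∈ SolidHull A) → DisjointSeq x → WeaklyNull x

/-- The positive Schur property. -/
def PositiveSchur (E : Type*) [NormedAddCommGroup E] [Lattice E] [HasSolidNorm E] [IsOrderedAddMonoid E] [NormedSpace ℝ E] : Prop :=
  ∀ x : ℕ → E, DisjointSeq x → WeaklyNull x → Tendsto (fun n => ‖x n‖) atTop (𝓝 0)

/-- `|f|(|x|)`, via the Riesz–Kantorovich formula `|f|(|x|) = sup {f y : |y| ≤ |x|}`. -/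
def pabs (f : E →L[ℝ] ℝ) (x : E) : ℝ := sSup ((fun y => f y) '' {y : E | |y| ≤ |x|})

/-- Totally bounded for the absolute weak topology `|σ|(E,E')` generated by the
seminorms `x ↦ |f|(|x|)`. -/
def AWTotallyBounded (A : Set E) : Prop :=
  ∀ ε > (0:ℝ), ∀ s : Finset (E →L[ℝ] ℝ), ∃ Φ : Finset E, ↑Φ ⊆ A ∧
    ∀ x ∈ A, ∃ y ∈ Φ, ∀ f ∈ s, pabs f (x - y) < ε

/-- Pointwise order on the dual: `f ≤ g` iff `f x ≤ g x` for all `x ≥ 0`. -/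
def dualLe (f g : E →L[ℝ] ℝ) : Prop := ∀ x : E, 0 ≤ x → f x ≤ g x

/-- Order bounded operator: maps order intervals into order intervals. -/
def OrderBoundedOp (T : E →L[ℝ] F) : Prop :=
  ∀ a b : E, ∃ c d : F, T '' Set.Icc a b ⊆ Set.Icc c d

/-- PL-compact operator: the image of the closed unit ball is `|σ|(F,F')`-totally bounded. -/
def PLCompact (T : E →L[ℝ] F) : Prop :=
  AWTotallyBounded (T '' Metric.closedBall 0 1)

/-- AMAL-compact operator: the image of every order interval is `|σ|(F,F')`-totally bounded. -/
def AMALCompact (T : E →L[ℝ] F) : Prop :=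
  ∀ x : E, 0 ≤ x → AWTotallyBounded (T '' Set.Icc (-x) x)

/-- The dual norm is order continuous: `‖f_α‖ → 0` for every decreasing net `f_α ↓ 0`
of positive functionals. -/
def DualOrderContinuousNorm (E : Type*) [NormedAddCommGroup E] [Lattice E] [HasSolidNorm E] [IsOrderedAddMonoid E] [NormedSpace ℝ E] : Prop :=
  ∀ (ι : Type) (_ : Preorder ι) (_ : Nonempty ι),
    (∀ i j : ι, ∃ k, i ≤ k ∧ j ≤ k) → ∀ f : ι → E →L[ℝ] ℝ,
    (∀ i j, i ≤ j → dualLe (f j) (f i)) →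
    (∀ i, dualLe 0 (f i)) →
    (∀ g, (∀ i, dualLe g (f i)) → dualLe g 0) →
    Tendsto (fun i => ‖f i‖) atTop (𝓝 0)

/-- An atom of the dual lattice: a positive nonzero functional such that any two disjoint
positive functionals below it cannot both be nonzero. -/
def DualAtom (a : E →L[ℝ] ℝ) : Prop :=
  dualLe 0 a ∧ a ≠ 0 ∧
  ∀ b c : E →L[ℝ] ℝ, dualLe 0 b → dualLe b a → dualLe 0 c → dualLe c a →
    (∀ x : E, 0 ≤ x → ∀ ε > (0:ℝ), ∃ y : E, 0 ≤ y ∧ y ≤ x ∧ b y + c (x - y) < ε) →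
    b = 0 ∨ c = 0

/-- `|f|` is disjoint from the positive functional `a`, i.e. `(|f| ⊓ a)(x) = 0` for `x ≥ 0`. -/
def dualAbsDisjoint (f a : E →L[ℝ] ℝ) : Prop :=
  ∀ x : E, 0 ≤ x → ∀ ε > (0:ℝ), ∃ y : E, 0 ≤ y ∧ y ≤ x ∧ pabs f y + a (x - y) < ε

/-- The dual Banach lattice is discrete: the band generated by its atoms is everything,
i.e. the disjoint complement of the set of atoms is trivial. -/
def DualDiscrete (E : Type*) [NormedAddCommGroup E] [Lattice E] [HasSolidNorm E] [IsOrderedAddMonoid E] [NormedSpace ℝ E] : Prop :=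
  ∀ f : E →L[ℝ] ℝ, (∀ a : E →L[ℝ] ℝ, DualAtom a → dualAbsDisjoint f a) → f = 0

/-- The absolute weak* topology `|σ|(E',E)` on the dual, generated by the
seminorms `f ↦ |f|(|x|)`. -/
def awStarTop (E : Type*) [NormedAddCommGroup E] [Lattice E] [HasSolidNorm E] [IsOrderedAddMonoid E] [NormedSpace ℝ E] :
    TopologicalSpace (E →L[ℝ] ℝ) :=
  ⨅ x : E, TopologicalSpace.induced (fun f => pabs f x) inferInstance

end Defs

section Aux
set_option linter.unusedSectionVars false
variable {E : Type*} [NormedAddCommGroup E] [Lattice E] [HasSolidNorm E] [IsOrderedAddMonoid E] [NormedSpace ℝ E]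

lemma dy_semiclosed : ∀ (k : ℕ) (z : E), 0 ≤ (2^k) • z → 0 ≤ z := by
  intro k
  induction k with
  | zero => intro z h; simpa using h
  | succ k ih =>
    intro z h
    have h2 : (0:E) ≤ 2 • z := by
      apply ih
      rw [← mul_nsmul]
      rw [mul_comm, ← pow_succ]
      exact h
    exact nsmul_two_semiclosed h2

lemma rsmul_nonneg {c : ℝ} {x : E} (hc : 0 ≤ c) (hx : 0 ≤ x) : 0 ≤ c • x := by
  have key : ∀ k : ℕ, (0:E) ≤ ((⌊c * 2^k⌋₊ + 1 : ℕ) / (2^k : ℝ)) • x := by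
    intro k
    apply dy_semiclosed k
    have h2 : ((2:ℝ)^k) • (((⌊c * 2^k⌋₊ + 1 : ℕ) / (2^k : ℝ)) • x)
        = ((⌊c * 2^k⌋₊ + 1 : ℕ) : ℝ) • x := by
      rw [smul_smul]
      congr 1
      field_simp
    calc (0:E) ≤ (⌊c * 2^k⌋₊ + 1) • x := nsmul_nonneg hx _
    _ = ((⌊c * 2^k⌋₊ + 1 : ℕ) : ℝ) • x := (Nat.cast_smul_eq_nsmul ℝ _ x).symm
    _ = ((2:ℝ)^k) • (((⌊c * 2^k⌋₊ + 1 : ℕ) / (2^k : ℝ)) • x) := h2.symm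
    _ = ((2:ℕ)^k) • (((⌊c * 2^k⌋₊ + 1 : ℕ) / (2^k : ℝ)) • x) := by
        rw [← Nat.cast_smul_eq_nsmul ℝ]; norm_num
  have hlim : Tendsto (fun k : ℕ => ((⌊c * 2^k⌋₊ + 1 : ℕ) / (2^k : ℝ))) atTop (𝓝 c) := by
    have hb : ∀ k : ℕ, ((⌊c * 2^k⌋₊ + 1 : ℕ) / (2^k : ℝ)) ≤ c + (1/2)^k := by
      intro k
      rw [div_le_iff₀ (by positivity)]
      push_cast
      have : (⌊c * 2^k⌋₊ : ℝ) ≤ c * 2^k := Nat.floor_le (by positivity)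
      have h2 : ((1:ℝ)/2)^k * 2^k = 1 := by
        rw [div_pow, one_pow, div_mul_cancel₀]; positivity
      nlinarith [this, h2]
    have ha : ∀ k : ℕ, c ≤ ((⌊c * 2^k⌋₊ + 1 : ℕ) / (2^k : ℝ)) := by
      intro k
      rw [le_div_iff₀ (by positivity)]
      push_cast
      have := Nat.lt_floor_add_one (c * 2^k)
      linarith
    have h1 : Tendsto (fun k : ℕ => c + (1/2:ℝ)^k) atTop (𝓝 c) := by
      have := tendsto_pow_atTop_nhds_zero_of_lt_one (by norm_num : (0:ℝ) ≤ 1/2) (by norm_num)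
      simpa using tendsto_const_nhds.add this
    exact tendsto_of_tendsto_of_tendsto_of_le_of_le tendsto_const_nhds h1 ha hb
  have : Tendsto (fun k : ℕ => ((⌊c * 2^k⌋₊ + 1 : ℕ) / (2^k : ℝ)) • x) atTop (𝓝 (c • x)) :=
    hlim.smul_const x
  exact le_of_tendsto_of_tendsto' tendsto_const_nhds this (fun k => key k)

end Aux

section Aux2
set_option linter.unusedSectionVars false
variable {E : Type*} [NormedAddCommGroup E] [Lattice E] [HasSolidNorm E] [IsOrderedAddMonoid E] [NormedSpace ℝ E]


lemma rsmul_le_rsmul {c : ℝ} {x y : E} (hc : 0 ≤ c) (h : x ≤ y) : c • x ≤ c • y := by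
  have := rsmul_nonneg hc (sub_nonneg.2 h)
  rwa [smul_sub, sub_nonneg] at this

lemma riesz_decomp {a b w : E} (ha : 0 ≤ a) (hb : 0 ≤ b) (hw : |w| ≤ a + b) :
    ∃ w₁ w₂ : E, w = w₁ + w₂ ∧ |w₁| ≤ a ∧ |w₂| ≤ b := by
  obtain ⟨hw1, hw2⟩ := abs_le'.1 hw
  refine ⟨(w ⊓ a) ⊔ (-a), w - ((w ⊓ a) ⊔ (-a)), by abel, ?_, ?_⟩
  · refine abs_le'.2 ⟨sup_le inf_le_right (neg_le_self ha), ?_⟩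
    exact neg_le.2 (le_sup_right : -a ≤ (w ⊓ a) ⊔ -a)
  · refine abs_le'.2 ⟨?_, ?_⟩
    · have h1 : w - ((w ⊓ a) ⊔ (-a)) ≤ w - (w ⊓ a) := sub_le_sub_left le_sup_left _
      refine h1.trans ?_
      rw [sub_inf]
      refine sup_le (by simpa using hb) ?_
      rw [sub_le_iff_le_add, add_comm]
      exact hw1
    · rw [neg_sub, sub_le_iff_le_add]
      refine sup_le (inf_le_left.trans (le_add_of_nonneg_left hb)) ?_
      rw [neg_le]
      calc -(b + w) = -w - b := by abel
      _ ≤ a := by rw [sub_le_iff_le_add]; exact hw2.trans (by rw [add_comm])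

lemma abs_le_norm_bound (f : E →L[ℝ] ℝ) {y x : E} (h : |y| ≤ |x|) : ‖y‖ ≤ ‖x‖ := by
  rw [← norm_abs_eq_norm y, ← norm_abs_eq_norm x]
  exact HasSolidNorm.solid (by rwa [abs_abs, abs_abs])

lemma pabs_bddAbove (f : E →L[ℝ] ℝ) (x : E) :
    BddAbove ((fun y => f y) '' {y : E | |y| ≤ |x|}) := by
  refine ⟨‖f‖ * ‖x‖, ?_⟩
  rintro r ⟨y, hy, rfl⟩
  calc f y ≤ |f y| := le_abs_self _
  _ ≤ ‖f‖ * ‖y‖ := by rw [← Real.norm_eq_abs]; exact f.le_opNorm y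
  _ ≤ ‖f‖ * ‖x‖ := by
      have := abs_le_norm_bound f hy
      exact mul_le_mul_of_nonneg_left this (norm_nonneg f)

lemma pabs_set_nonempty (f : E →L[ℝ] ℝ) (x : E) :
    ((fun y => f y) '' {y : E | |y| ≤ |x|}).Nonempty :=
  ⟨f 0, 0, by simp, rfl⟩

lemma pabs_nonneg (f : E →L[ℝ] ℝ) (x : E) : 0 ≤ pabs f x := by
  have := le_csSup (pabs_bddAbove f x) (show f 0 ∈ _ from ⟨0, by simp, rfl⟩)
  simpa [pabs] using this

lemma pabs_le (f : E →L[ℝ] ℝ) (x : E) : pabs f x ≤ ‖f‖ * ‖x‖ := by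
  apply csSup_le (pabs_set_nonempty f x)
  rintro r ⟨y, hy, rfl⟩
  calc f y ≤ |f y| := le_abs_self _
  _ ≤ ‖f‖ * ‖y‖ := by rw [← Real.norm_eq_abs]; exact f.le_opNorm y
  _ ≤ ‖f‖ * ‖x‖ := mul_le_mul_of_nonneg_left (abs_le_norm_bound f hy) (norm_nonneg f)

lemma pabs_mono (f : E →L[ℝ] ℝ) {x z : E} (h : |x| ≤ |z|) : pabs f x ≤ pabs f z := by
  apply csSup_le_csSup (pabs_bddAbove f z) (pabs_set_nonempty f x)
  rintro r ⟨y, hy, rfl⟩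
  exact ⟨y, le_trans hy h, rfl⟩

lemma pabs_neg (f : E →L[ℝ] ℝ) (x : E) : pabs f (-x) = pabs f x := by
  unfold pabs; rw [abs_neg]

lemma le_pabs (f : E →L[ℝ] ℝ) {y x : E} (h : |y| ≤ |x|) : f y ≤ pabs f x :=
  le_csSup (pabs_bddAbove f x) ⟨y, h, rfl⟩

lemma pabs_add (f : E →L[ℝ] ℝ) (x y : E) : pabs f (x + y) ≤ pabs f x + pabs f y := by
  apply csSup_le (pabs_set_nonempty f (x+y))
  rintro r ⟨w, hw, rfl⟩
  have hw' : |w| ≤ |x| + |y| := le_trans hw (abs_add_le x y)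
  obtain ⟨w₁, w₂, rfl, h1, h2⟩ := riesz_decomp (abs_nonneg x) (abs_nonneg y) hw'
  show f (w₁ + w₂) ≤ _
  rw [map_add]
  exact add_le_add (le_pabs f h1) (le_pabs f h2)

lemma pabs_sub_le (f : E →L[ℝ] ℝ) (x y z : E) :
    pabs f (x - y) ≤ pabs f (x - z) + pabs f (z - y) := by
  have : x - y = (x - z) + (z - y) := by abel
  rw [this]; exact pabs_add f _ _

lemma exists_lt_pabs (f : E →L[ℝ] ℝ) {x : E} {r : ℝ} (h : r < pabs f x) :
    ∃ z : E, |z| ≤ |x| ∧ r < f z := by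
  obtain ⟨s, ⟨z, hz, rfl⟩, hr⟩ := exists_lt_of_lt_csSup (pabs_set_nonempty f x) h
  exact ⟨z, hz, hr⟩

end Aux2

section Main
set_option linter.unusedSectionVars false
variable {E : Type*} [NormedAddCommGroup E] [Lattice E] [HasSolidNorm E] [IsOrderedAddMonoid E] [NormedSpace ℝ E]

lemma rsmul_le_rsmul_of_le {c d : ℝ} {x : E} (h : c ≤ d) (hx : 0 ≤ x) : c • x ≤ d • x := by
  have := rsmul_nonneg (sub_nonneg.2 h) hx
  rwa [sub_smul, sub_nonneg] at this

lemma rsmul_sup_zero {c : ℝ} (hc : 0 < c) (w : E) : c • (w ⊔ 0) = (c • w) ⊔ 0 := by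
  have key : ∀ (e : ℝ), 0 < e → ∀ v : E, (e • v) ⊔ 0 ≤ e • (v ⊔ 0) := by
    intro e he v
    exact sup_le (rsmul_le_rsmul he.le le_sup_left) (rsmul_nonneg he.le le_sup_right)
  apply le_antisymm ?_ (key c hc w)
  have h2 := key c⁻¹ (by positivity) (c • w)
  have h3 := rsmul_le_rsmul (c := c) hc.le h2
  rw [smul_smul, smul_smul, mul_inv_cancel₀ hc.ne', one_smul] at h3
  calc c • (w ⊔ 0) = c • ((c⁻¹ * c) • w ⊔ 0) := by rw [inv_mul_cancel₀ hc.ne', one_smul]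
  _ ≤ (c • w) ⊔ 0 := by rw [mul_smul] at *; exact h3

lemma disj_aux {a b : E} (ha : 0 ≤ a) (hb : 0 ≤ b) {c d : ℝ} (hc : 0 < c) (hd : 0 < d)
    (hcd : 1 ≤ c * d) : ((a - c • b) ⊔ 0) ⊓ ((b - d • a) ⊔ 0) = 0 := by
  set r := ((a - c • b) ⊔ 0) ⊓ ((b - d • a) ⊔ 0) with hr
  have hr0 : 0 ≤ r := le_inf le_sup_right le_sup_right
  have h1 : c • r ≤ ((c • b - a) ⊔ 0) := by
    have : c • r ≤ c • ((b - d • a) ⊔ 0) := rsmul_le_rsmul hc.le inf_le_right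
    rw [rsmul_sup_zero hc] at this
    refine this.trans (sup_le_sup_right ?_ 0)
    rw [smul_sub, smul_smul]
    apply sub_le_sub_left
    calc a = (1:ℝ) • a := (one_smul ℝ a).symm
    _ ≤ (c * d) • a := rsmul_le_rsmul_of_le hcd ha
  set e := min c 1 with he
  have he0 : 0 < e := lt_min hc one_pos
  have h2 : e • r ≤ ((a - c • b) ⊔ 0) := by
    calc e • r ≤ (1:ℝ) • r := rsmul_le_rsmul_of_le (min_le_right c 1) hr0
    _ = r := one_smul ℝ r
    _ ≤ _ := inf_le_left
  have h3 : e • r ≤ ((c • b - a) ⊔ 0) := by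
    refine le_trans ?_ h1
    exact rsmul_le_rsmul_of_le (min_le_left c 1) hr0
  have h4 : ((a - c • b) ⊔ 0) ⊓ (((c • b - a)) ⊔ 0) = 0 := by
    have := posPart_inf_negPart_eq_zero (a - c • b)
    rwa [posPart_def, negPart_def, neg_sub] at this
  have h5 : e • r ≤ 0 := by
    rw [← h4]; exact le_inf h2 h3
  have h6 : e • r = 0 := le_antisymm h5 (rsmul_nonneg he0.le hr0)
  have := congrArg (fun w => e⁻¹ • w) h6
  simpa [smul_smul, inv_mul_cancel₀ he0.ne'] using this

lemma step1 {A : Set E} [CompleteSpace E] (hA : DisjointlyWeaklyCompact A) (f : E →L[ℝ] ℝ)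
    {ε : ℝ} (hε : 0 < ε) :
    ∃ u : E, 0 ≤ u ∧ ∀ x ∈ A, pabs f ((|x| - u) ⊔ 0) < ε := by
  by_contra hcon
  push_neg at hcon
  classical
  obtain ⟨M, hM⟩ : ∃ M, ∀ x ∈ A, ‖x‖ ≤ M := isBounded_iff_forall_norm_le.1 hA.1
  set C : E → E := fun u => if h : 0 ≤ u then (hcon u h).choose else 0 with hCdef
  have hC : ∀ u, 0 ≤ u → C u ∈ A ∧ ε ≤ pabs f ((|C u| - u) ⊔ 0) := by
    intro u hu
    simp only [hCdef, dif_pos hu]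
    exact ⟨(hcon u hu).choose_spec.1, (hcon u hu).choose_spec.2⟩
  set go : ℕ → E × E := fun n => Nat.rec (C 0, |C 0|)
    (fun k p => (C ((4^(k+1)) • p.2), p.2 + |C ((4^(k+1)) • p.2)|)) n with hgo
  set a : ℕ → E := fun n => (go n).1 with ha
  set S : ℕ → E := fun n => (go n).2 with hS
  have hSsucc : ∀ k, S (k+1) = S k + |a (k+1)| := fun k => rfl
  have hS0 : S 0 = |a 0| := rfl
  have hSnonneg : ∀ n, 0 ≤ S n := by
    intro n
    induction n with
    | zero => rw [hS0]; exact abs_nonneg _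
    | succ k ih => rw [hSsucc]; exact add_nonneg ih (abs_nonneg _)
  have hSmono : ∀ m n, m ≤ n → S m ≤ S n := fun m n hmn =>
    monotone_nat_of_le_succ (fun k => by
      rw [hSsucc]; exact le_add_of_nonneg_right (abs_nonneg _)) hmn
  have habsS : ∀ m, |a m| ≤ S m := by
    intro m
    cases m with
    | zero => rw [hS0]
    | succ k => rw [hSsucc]; exact le_add_of_nonneg_left (hSnonneg k)
  set v : ℕ → E := fun n => Nat.rec 0 (fun k _ => (4^(k+1)) • S k) n with hv
  have hv0 : ∀ n, 0 ≤ v n := by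
    intro n
    cases n with
    | zero => exact le_refl _
    | succ k => exact nsmul_nonneg (hSnonneg k) _
  have hkey : ∀ n, a n ∈ A ∧ ε ≤ pabs f ((|a n| - v n) ⊔ 0) := by
    intro n
    cases n with
    | zero =>
      have h0 := hC 0 (le_refl 0)
      refine ⟨h0.1, ?_⟩
      have heq : (|a 0| - v 0) ⊔ 0 = (|C 0| - 0) ⊔ 0 := rfl
      rw [heq]
      exact h0.2
    | succ k => exact hC ((4^(k+1)) • S k) (nsmul_nonneg (hSnonneg k) _)
  have hmemA : ∀ n, a n ∈ A := fun n => (hkey n).1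
  have hnorm : ∀ n, ‖a n‖ ≤ M := fun n => hM _ (hmemA n)
  have hsum : Summable (fun k : ℕ => ((1:ℝ)/2)^k • |a k|) := by
    apply Summable.of_norm_bounded (g := fun k => (1/2:ℝ)^k * M)
    · exact (summable_geometric_of_lt_one (by norm_num) (by norm_num)).mul_right M
    · intro k
      rw [norm_smul, Real.norm_eq_abs, abs_pow, abs_of_nonneg (by norm_num : (0:ℝ) ≤ 1/2),
        norm_abs_eq_norm]
      exact mul_le_mul_of_nonneg_left (hnorm k) (by positivity)
  set u : E := ∑' k, ((1:ℝ)/2)^k • |a k| with hu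
  have hu0 : 0 ≤ u := tsum_nonneg (fun k => rsmul_nonneg (by positivity) (abs_nonneg _))
  have hule : ∀ n, ((1:ℝ)/2)^n • |a n| ≤ u :=
    fun n => Summable.le_tsum hsum n (fun k _ => rsmul_nonneg (by positivity) (abs_nonneg _))
  set y : ℕ → E := fun n => (|a n| - v n - ((1:ℝ)/2)^n • u) ⊔ 0 with hy
  have hy0 : ∀ n, 0 ≤ y n := fun n => le_sup_right
  have hyabs : ∀ n, y n ≤ |a n| := by
    intro n
    apply sup_le _ (abs_nonneg _)
    rw [sub_sub]
    exact sub_le_self _ (add_nonneg (hv0 n) (rsmul_nonneg (by positivity) hu0))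
  have hdisj : ∀ m n, m < n → y m ⊓ y n = 0 := by
    intro m n hmn
    have h1 : y m ≤ (|a m| - ((1:ℝ)/2)^(m+n) • |a n|) ⊔ 0 := by
      apply sup_le_sup_right
      apply sub_le_sub
      · exact sub_le_self _ (hv0 m)
      · calc ((1:ℝ)/2)^(m+n) • |a n| = ((1:ℝ)/2)^m • (((1:ℝ)/2)^n • |a n|) := by
              rw [smul_smul, ← pow_add]
        _ ≤ ((1:ℝ)/2)^m • u := rsmul_le_rsmul (by positivity) (hule n)
    have h2 : y n ≤ (|a n| - ((4:ℝ)^n) • |a m|) ⊔ 0 := by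
      apply sup_le_sup_right
      have hvn : ((4:ℝ)^n) • |a m| ≤ v n := by
        obtain ⟨k, rfl⟩ : ∃ k, n = k + 1 := ⟨n - 1, by omega⟩
        have hms : |a m| ≤ S k := (habsS m).trans (hSmono m k (by omega))
        have hv1 : v (k+1) = (4^(k+1) : ℕ) • S k := rfl
        rw [hv1]
        calc ((4:ℝ)^(k+1)) • |a m| = ((4^(k+1) : ℕ) : ℝ) • |a m| := by push_cast; ring_nf
        _ = (4^(k+1) : ℕ) • |a m| := Nat.cast_smul_eq_nsmul ℝ _ _
        _ ≤ (4^(k+1) : ℕ) • S k := nsmul_le_nsmul_right hms _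
      calc |a n| - v n - ((1:ℝ)/2)^n • u ≤ |a n| - v n :=
            sub_le_self _ (rsmul_nonneg (by positivity) hu0)
      _ ≤ |a n| - ((4:ℝ)^n) • |a m| := sub_le_sub_left hvn _
    have hcd : 1 ≤ ((1:ℝ)/2)^(m+n) * (4:ℝ)^n := by
      have h4 : (4:ℝ)^n = 2^(2*n) := by rw [pow_mul]; norm_num
      rw [div_pow, one_pow, h4, div_mul_eq_mul_div, one_mul, le_div_iff₀ (by positivity)]
      rw [one_mul]
      exact pow_le_pow_right₀ (by norm_num) (by omega)
    have := disj_aux (abs_nonneg (a m)) (abs_nonneg (a n)) (by positivity : (0:ℝ) < (1/2)^(m+n))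
      (by positivity : (0:ℝ) < (4:ℝ)^n) hcd
    exact le_antisymm (le_trans (inf_le_inf h1 h2) (le_of_eq this))
      (le_inf (hy0 m) (hy0 n))
  have hlow : ∀ n, ε - ‖f‖ * (((1:ℝ)/2)^n * ‖u‖) ≤ pabs f (y n) := by
    intro n
    have hw : (|a n| - v n) ⊔ 0 ≤ y n + ((1:ℝ)/2)^n • u := by
      apply sup_le
      · rw [← sub_le_iff_le_add]
        exact le_sup_left
      · exact add_nonneg (hy0 n) (rsmul_nonneg (by positivity) hu0)
    have hstart : ε ≤ pabs f (y n + ((1:ℝ)/2)^n • u) := by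
      refine le_trans (hkey n).2 (pabs_mono f ?_)
      rw [abs_of_nonneg (le_sup_right : (0:E) ≤ _),
        abs_of_nonneg (add_nonneg (hy0 n) (rsmul_nonneg (by positivity) hu0))]
      exact hw
    have hsplit := pabs_add f (y n) (((1:ℝ)/2)^n • u)
    have hnorm2 : pabs f (((1:ℝ)/2)^n • u) ≤ ‖f‖ * (((1:ℝ)/2)^n * ‖u‖) := by
      refine le_trans (pabs_le f _) ?_
      rw [norm_smul, Real.norm_eq_abs, abs_pow, abs_of_nonneg (by norm_num : (0:ℝ) ≤ 1/2)]
    linarith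
  obtain ⟨N, hN⟩ : ∃ N : ℕ, ∀ n ≥ N, ‖f‖ * (((1:ℝ)/2)^n * ‖u‖) < ε/2 := by
    have h1 : Tendsto (fun n : ℕ => ‖f‖ * (((1:ℝ)/2)^n * ‖u‖)) atTop (𝓝 0) := by
      have := tendsto_pow_atTop_nhds_zero_of_lt_one (by norm_num : (0:ℝ) ≤ 1/2) (by norm_num)
      have h2 := (this.mul_const ‖u‖).const_mul ‖f‖
      simpa using h2
    have := h1.eventually_lt_const (by linarith : (0:ℝ) < ε/2)
    exact eventually_atTop.1 this
  have hhalf : ∀ n ≥ N, ε/2 ≤ pabs f (y n) := by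
    intro n hn
    have := hlow n
    have := hN n hn
    linarith
  have hzex : ∀ n, ∃ z : E, |z| ≤ y n ∧ (ε/2 ≤ pabs f (y n) → ε/4 < f z) := by
    intro n
    by_cases hcase : ε/2 ≤ pabs f (y n)
    · obtain ⟨z, hz1, hz2⟩ := exists_lt_pabs f (show ε/4 < pabs f (y n) by linarith)
      exact ⟨z, by rwa [abs_of_nonneg (hy0 n)] at hz1, fun _ => hz2⟩
    · exact ⟨0, by rw [abs_zero]; exact hy0 n, fun hh => absurd hh hcase⟩
  choose z hz1 hz2 using hzex
  have hzsol : ∀ n, z n ∈ SolidHull A :=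
    fun n => ⟨a n, hmemA n, le_trans (hz1 n) (hyabs n)⟩
  have hzdisj : DisjointSeq z := by
    intro m n hmn
    unfold LatDisjoint
    have habs : ∀ k, |z k| ≤ y k := fun k => (hz1 k)
    rcases lt_or_gt_of_ne hmn with hlt | hlt
    · exact le_antisymm (le_trans (inf_le_inf (habs m) (habs n)) (le_of_eq (hdisj m n hlt)))
        (le_inf (abs_nonneg _) (abs_nonneg _))
    · rw [inf_comm]
      exact le_antisymm (le_trans (inf_le_inf (habs n) (habs m)) (le_of_eq (hdisj n m hlt)))
        (le_inf (abs_nonneg _) (abs_nonneg _))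
  have hWN : Tendsto (fun n => f (z n)) atTop (𝓝 0) := hA.2 z hzsol hzdisj f
  have hev : ∀ᶠ n in atTop, f (z n) < ε/4 := hWN.eventually_lt_const (by linarith)
  obtain ⟨K, hK⟩ := eventually_atTop.1 hev
  have h1 := hz2 (max N K) (hhalf _ (le_max_left N K))
  have h2 := hK (max N K) (le_max_right N K)
  linarith


end Main

theorem stmt14 {E : Type*} [NormedAddCommGroup E] [Lattice E] [HasSolidNorm E] [IsOrderedAddMonoid E] [NormedSpace ℝ E] [CompleteSpace E]
    (h : ∀ x : E, 0 ≤ x → AWTotallyBounded (Set.Icc (-x) x)) :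
    ∀ A : Set E, DisjointlyWeaklyCompact A → AWTotallyBounded A := by
  intro A hA ε hε s
  classical
  set ε' := ε/4 with hε'def
  have hε' : 0 < ε' := by rw [hε'def]; linarith
  have hstep : ∀ f : E →L[ℝ] ℝ, ∃ u : E, 0 ≤ u ∧ ∀ x ∈ A, pabs f ((|x| - u) ⊔ 0) < ε' :=
    fun f => step1 hA f hε'
  choose U hU1 hU2 using hstep
  set u : E := ∑ f ∈ s, U f with hu
  have hu0 : 0 ≤ u := Finset.sum_nonneg (fun f _ => hU1 f)
  have hUle : ∀ f ∈ s, U f ≤ u := fun f hf => Finset.single_le_sum (fun g _ => hU1 g) hf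
  have hsmall : ∀ x ∈ A, ∀ f ∈ s, pabs f ((|x| - u) ⊔ 0) < ε' := by
    intro x hx f hf
    refine lt_of_le_of_lt (pabs_mono f ?_) (hU2 f x hx)
    rw [abs_of_nonneg (le_sup_right : (0:E) ≤ _), abs_of_nonneg (le_sup_right : (0:E) ≤ _)]
    exact sup_le_sup_right (sub_le_sub_left (hUle f hf) _) 0
  obtain ⟨Φ₀, hΦ₀sub, hΦ₀⟩ := h u hu0 ε' hε' s
  have hdecomp : ∀ x ∈ A, ∃ w ∈ Φ₀, ∀ f ∈ s, pabs f (x - w) < ε' + ε' := by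
    intro x hx
    have habs : |x| ≤ u + (|x| - u) ⊔ 0 := by
      calc |x| = u + (|x| - u) := by abel
      _ ≤ _ := add_le_add_right le_sup_left u
    obtain ⟨x₁, x₂, hxeq, hx1, hx2⟩ := riesz_decomp hu0 le_sup_right habs
    have hx1m : x₁ ∈ Set.Icc (-u) u := by
      obtain ⟨hl, hr⟩ := abs_le'.1 hx1
      exact ⟨neg_le.1 hr, hl⟩
    obtain ⟨w, hwΦ, hw⟩ := hΦ₀ x₁ hx1m
    refine ⟨w, hwΦ, fun f hf => ?_⟩
    have h1 : pabs f (x - w) ≤ pabs f (x₁ - w) + pabs f x₂ := by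
      have heq : x - w = (x₁ - w) + x₂ := by rw [hxeq]; abel
      rw [heq]; exact pabs_add f _ _
    have h2 : pabs f x₂ ≤ pabs f ((|x| - u) ⊔ 0) := by
      refine pabs_mono f ?_
      rwa [abs_of_nonneg (le_sup_right : (0:E) ≤ _)]
    have h3 := hsmall x hx f hf
    have h4 := hw f hf
    linarith
  set P : E → Prop := fun w => ∃ x ∈ A, ∀ f ∈ s, pabs f (x - w) < ε' + ε' with hP
  set ψ : E → E := fun w => if hw : P w then hw.choose else 0 with hψdef
  have hψ : ∀ w, P w → ψ w ∈ A ∧ ∀ f ∈ s, pabs f (ψ w - w) < ε' + ε' := by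
    intro w hw
    simp only [hψdef, dif_pos hw]
    obtain ⟨hx1, hx2⟩ := hw.choose_spec
    exact ⟨hx1, hx2⟩
  refine ⟨(Φ₀.filter P).image ψ, ?_, ?_⟩
  · intro x hx
    obtain ⟨w, hw, rfl⟩ := Finset.mem_image.1 hx
    exact (hψ w (Finset.mem_filter.1 hw).2).1
  · intro x hx
    obtain ⟨w, hwΦ, hw⟩ := hdecomp x hx
    have hPw : P w := ⟨x, hx, hw⟩
    refine ⟨ψ w, Finset.mem_image_of_mem ψ (Finset.mem_filter.2 ⟨hwΦ, hPw⟩), ?_⟩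
    intro f hf
    have h1 := pabs_sub_le f x (ψ w) w
    have h2 : pabs f (w - ψ w) = pabs f (ψ w - w) := by
      rw [← pabs_neg f (ψ w - w)]; congr 1; abel
    have h3 := (hψ w hPw).2 f hf
    have h4 := hw f hf
    have h5 : ε' + ε' + (ε' + ε') = ε := by rw [hε'def]; ring
    rw [h2] at h1
    linarith

end
end

section
/- Let E, F be Banach lattices and let T : E → F be an order bounded AMAL-compact operator. Then T maps every disjointly weakly compact subset of E onto a |σ|(F,F′)-totally bounded subset of F. -/
open Filter Topology ZeroAtInfty Set Bornology

noncomputable section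

section AmalHelpers
variable {E : Type*} [NormedAddCommGroup E] [Lattice E] [HasSolidNorm E] [IsOrderedAddMonoid E] [NormedSpace ℝ E]

omit [NormedSpace ℝ E] in
lemma amal_abs_def (a : E) : |a| = a ⊔ -a := rfl

omit [NormedSpace ℝ E] in
lemma amal_inf_add_le {a b c : E} (ha : 0 ≤ a) (hb : 0 ≤ b) (hc : 0 ≤ c) :
    a ⊓ (b + c) ≤ a ⊓ b + a ⊓ c := by
  have h1 : a ⊓ (b + c) - a ⊓ c = (a ⊓ (b + c) - a) ⊔ (a ⊓ (b + c) - c) := sub_inf a c _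
  have hda : a ⊓ (b + c) ≤ a := inf_le_left
  have hdbc : a ⊓ (b + c) ≤ b + c := inf_le_right
  rw [← sub_le_iff_le_add, h1]
  refine sup_le (le_inf ?_ ?_) (le_inf ?_ ?_)
  · exact sub_le_iff_le_add.2 (hda.trans (le_add_of_nonneg_left ha))
  · exact sub_le_iff_le_add.2 (hda.trans (le_add_of_nonneg_left hb))
  · exact sub_le_iff_le_add.2 (hda.trans (le_add_of_nonneg_right hc))
  · exact sub_le_iff_le_add.2 hdbc

omit [NormedSpace ℝ E] in
lemma amal_disj_nsmul {a b : E} (ha : 0 ≤ a) (hb : 0 ≤ b) (h : a ⊓ b = 0) :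
    ∀ n : ℕ, a ⊓ (n • b) = 0 := by
  intro n; induction n with
  | zero => simp [inf_eq_right.mpr ha]
  | succ n ih =>
    refine le_antisymm ?_ (le_inf ha (nsmul_nonneg hb (n+1)))
    have : a ⊓ ((n+1) • b) ≤ a ⊓ (n • b) + a ⊓ b := by
      rw [succ_nsmul]
      exact amal_inf_add_le ha (nsmul_nonneg hb n) hb
    simpa [ih, h] using this

omit [NormedSpace ℝ E] in
lemma amal_nsmul_cancel {x : E} {n : ℕ} (h : 0 ≤ (n+1) • x) : 0 ≤ x := by
  have hd : x⁻ ⊓ x⁺ = 0 := by rw [inf_comm]; exact posPart_inf_negPart_eq_zero x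
  have h1 : (n+1) • x⁻ ≤ (n+1) • x⁺ := by
    have h2 : (n+1) • x = (n+1) • x⁺ - (n+1) • x⁻ := by
      rw [← nsmul_sub, posPart_sub_negPart]
    have := h; rw [h2, sub_nonneg] at this; exact this
  have h3 : x⁻ ≤ (n+1) • x⁻ := by
    rw [succ_nsmul]
    exact le_add_of_nonneg_left (nsmul_nonneg (negPart_nonneg x) n)
  have h4 : x⁻ ≤ (n+1) • x⁺ := h3.trans h1
  have h6 : x⁻ ⊓ ((n+1) • x⁺) = 0 :=
    amal_disj_nsmul (negPart_nonneg x) (posPart_nonneg x) hd (n+1)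
  have h5 : x⁻ = 0 := by rw [← h6, inf_eq_left.mpr h4]
  exact negPart_eq_zero.mp h5

lemma amal_unit_frac_smul_nonneg {x : E} (hx : 0 ≤ x) (n m : ℕ) :
    0 ≤ ((n : ℝ)/(m+1)) • x := by
  apply amal_nsmul_cancel (n := m)
  have h : (m+1) • (((n : ℝ)/(m+1)) • x) = n • x := by
    rw [← Nat.cast_smul_eq_nsmul ℝ (m+1), ← Nat.cast_smul_eq_nsmul ℝ n, smul_smul]
    congr 1
    push_cast
    field_simp
  rw [h]
  exact nsmul_nonneg hx n

lemma amal_smul_nonneg {r : ℝ} {x : E} (hr : 0 ≤ r) (hx : 0 ≤ x) : 0 ≤ r • x := by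
  have hS : IsClosed {c : ℝ | 0 ≤ c • x} :=
    isClosed_nonneg.preimage (continuous_id.smul continuous_const)
  have key : ∀ k : ℕ, ∃ q : ℚ, r < (q:ℝ) ∧ (q:ℝ) < r + 1/(k+1) := by
    intro k
    have h : (0:ℝ) < 1/((k:ℝ)+1) := by positivity
    exact exists_rat_btwn (by linarith)
  choose q hq1 hq2 using key
  have hqn : ∀ k, 0 ≤ ((q k : ℚ):ℝ) • x := by
    intro k
    have hq0 : (0:ℝ) < (q k : ℝ) := lt_of_le_of_lt hr (hq1 k)
    have hnum : (0:ℤ) ≤ (q k).num := by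
      have : (0:ℚ) < q k := by exact_mod_cast hq0
      exact (Rat.num_pos.mpr this).le
    have hcast : ((q k : ℚ) : ℝ) = ((q k).num.toNat : ℝ)/((((q k).den - 1 : ℕ)) + 1) := by
      rw [Rat.cast_def]
      congr 1
      · exact_mod_cast (Int.toNat_of_nonneg hnum).symm
      · have : ((q k).den - 1 : ℕ) + 1 = (q k).den := Nat.succ_pred_eq_of_pos (q k).pos
        rw [← this]; push_cast; ring
    rw [hcast]
    exact amal_unit_frac_smul_nonneg hx _ _
  have htend : Tendsto (fun k : ℕ => ((q k : ℚ):ℝ)) atTop (𝓝 r) := by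
    have h0 : Tendsto (fun k : ℕ => r + 1/((k:ℝ)+1)) atTop (𝓝 (r + 0)) :=
      tendsto_const_nhds.add tendsto_one_div_add_atTop_nhds_zero_nat
    rw [add_zero] at h0
    exact tendsto_of_tendsto_of_tendsto_of_le_of_le tendsto_const_nhds h0
      (fun k => (hq1 k).le) (fun k => (hq2 k).le)
  have : r ∈ {c : ℝ | 0 ≤ c • x} := hS.mem_of_tendsto htend (Eventually.of_forall hqn)
  exact this

lemma amal_smul_mono {r : ℝ} (hr : 0 ≤ r) {x y : E} (h : x ≤ y) : r • x ≤ r • y :=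
  sub_nonneg.1 (by rw [← smul_sub]; exact amal_smul_nonneg hr (sub_nonneg.2 h))

lemma amal_smul_sup {r : ℝ} (hr : 0 ≤ r) (x y : E) : r • (x ⊔ y) = (r • x) ⊔ (r • y) := by
  rcases eq_or_lt_of_le hr with h0 | h0
  · simp [← h0]
  refine le_antisymm ?_ (sup_le (amal_smul_mono hr le_sup_left) (amal_smul_mono hr le_sup_right))
  have h1 : x ⊔ y ≤ r⁻¹ • ((r • x) ⊔ (r • y)) := by
    refine sup_le ?_ ?_
    · have := amal_smul_mono (inv_nonneg.mpr hr) (le_sup_left (a := r • x) (b := r • y))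
      rwa [inv_smul_smul₀ h0.ne'] at this
    · have := amal_smul_mono (inv_nonneg.mpr hr) (le_sup_right (a := r • x) (b := r • y))
      rwa [inv_smul_smul₀ h0.ne'] at this
  have := amal_smul_mono hr h1
  rwa [smul_inv_smul₀ h0.ne'] at this

lemma amal_smul_posPart {r : ℝ} (hr : 0 ≤ r) (x : E) : (r • x)⁺ = r • x⁺ := by
  rw [posPart_def, posPart_def, amal_smul_sup hr, smul_zero]

lemma amal_abs_smul {r : ℝ} (hr : 0 ≤ r) (x : E) : |r • x| = r • |x| := by
  rw [abs, abs, ← smul_neg, ← amal_smul_sup hr]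

end AmalHelpers

section Trunc
variable {E : Type*} [NormedAddCommGroup E] [Lattice E] [HasSolidNorm E] [IsOrderedAddMonoid E] [NormedSpace ℝ E]

omit [NormedSpace ℝ E] in
lemma amal_trunc_abs_le {u : E} (hu : 0 ≤ u) (x : E) : |(x ⊔ -u) ⊓ u| ≤ u := by
  rw [abs_le']
  refine ⟨inf_le_right, ?_⟩
  rw [neg_le]
  exact le_inf (le_sup_right) (neg_le_self hu)

omit [NormedSpace ℝ E] in
lemma amal_trunc_sub {u : E} (hu : 0 ≤ u) (x : E) : |x - (x ⊔ -u) ⊓ u| ≤ (|x| - u)⁺ := by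
  have h1 : x - (x ⊔ -u) ⊓ u = (x - (x ⊔ -u)) ⊔ (x - u) := sub_inf _ _ _
  rw [abs_le']
  constructor
  · rw [h1]
    refine sup_le ?_ ?_
    · have h2 : x - (x ⊔ -u) = (x - x) ⊓ (x - -u) := sub_sup _ _ _
      rw [h2, sub_self]
      exact inf_le_left.trans (posPart_nonneg _)
    · exact (sub_le_sub_right (le_abs_self x) u).trans (le_posPart _)
  · rw [h1, neg_sup]  -- -(a ⊔ b) = -a ⊓ -b
    refine inf_le_left.trans ?_
    rw [neg_sub]
    have h3 : (x ⊔ -u) - x = (x - x) ⊔ (-u - x) := sup_sub _ _ _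
    rw [h3, sub_self]
    have h4 : -u - x ≤ |x| - u := by
      have : -x ≤ |x| := neg_le_abs x
      calc -u - x = -x - u := by abel
      _ ≤ |x| - u := sub_le_sub_right this u
    calc (0 : E) ⊔ (-u - x) ≤ 0 ⊔ (|x| - u) := sup_le_sup_left h4 0
    _ = (|x| - u)⁺ := by rw [posPart_def, sup_comm]

omit [NormedSpace ℝ E] in
lemma amal_riesz {y a b : E} (ha : 0 ≤ a) (hb : 0 ≤ b) (h : |y| ≤ a + b) :
    ∃ y₁ y₂ : E, y = y₁ + y₂ ∧ |y₁| ≤ a ∧ |y₂| ≤ b := by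
  refine ⟨(y ⊔ -a) ⊓ a, y - (y ⊔ -a) ⊓ a, by abel, amal_trunc_abs_le ha y, ?_⟩
  refine (amal_trunc_sub ha y).trans ?_
  rw [posPart_def]
  exact sup_le (sub_le_iff_le_add.2 (h.trans (by rw [add_comm]))) hb

end Trunc

section PabsLemmas
variable {F : Type*} [NormedAddCommGroup F] [Lattice F] [HasSolidNorm F] [IsOrderedAddMonoid F] [NormedSpace ℝ F] (f : F →L[ℝ] ℝ)

lemma amal_pabs_bdd (x : F) : BddAbove ((fun y => f y) '' {y : F | |y| ≤ |x|}) := by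
  refine ⟨‖f‖ * ‖x‖, ?_⟩
  rintro r ⟨y, hy, rfl⟩
  have h1 : ‖y‖ ≤ ‖x‖ := by
    have := norm_le_norm_of_abs_le_abs (a := y) (b := |x|) (by simpa [abs_abs] using hy)
    simpa [norm_abs_eq_norm] using this
  calc f y ≤ |f y| := le_abs_self _
  _ = ‖f y‖ := (Real.norm_eq_abs _).symm
  _ ≤ ‖f‖ * ‖y‖ := f.le_opNorm y
  _ ≤ ‖f‖ * ‖x‖ := by nlinarith [norm_nonneg f, norm_nonneg y]

lemma amal_pabs_ne (x : F) : ((fun y => f y) '' {y : F | |y| ≤ |x|}).Nonempty :=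
  ⟨f 0, ⟨0, by simp [abs_nonneg], rfl⟩⟩

lemma amal_le_pabs {x y : F} (h : |y| ≤ |x|) : f y ≤ pabs f x :=
  le_csSup (amal_pabs_bdd f x) ⟨y, h, rfl⟩

lemma amal_pabs_nonneg (x : F) : 0 ≤ pabs f x := by
  have := amal_le_pabs f (y := 0) (x := x) (by simp [abs_nonneg])
  simpa using this

lemma amal_pabs_le {x : F} {c : ℝ} (h : ∀ y : F, |y| ≤ |x| → f y ≤ c) : pabs f x ≤ c :=
  csSup_le (amal_pabs_ne f x) (by rintro r ⟨y, hy, rfl⟩; exact h y hy)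

lemma amal_pabs_le_norm (x : F) : pabs f x ≤ ‖f‖ * ‖x‖ := by
  refine amal_pabs_le f (fun y hy => ?_)
  have h1 : ‖y‖ ≤ ‖x‖ := by
    have := norm_le_norm_of_abs_le_abs (a := y) (b := |x|) (by simpa [abs_abs] using hy)
    simpa [norm_abs_eq_norm] using this
  calc f y ≤ ‖f y‖ := le_abs_self _
  _ ≤ ‖f‖ * ‖y‖ := f.le_opNorm y
  _ ≤ ‖f‖ * ‖x‖ := by nlinarith [norm_nonneg f, norm_nonneg y]

lemma amal_pabs_mono {x x' : F} (h : |x| ≤ |x'|) : pabs f x ≤ pabs f x' :=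
  amal_pabs_le f (fun y hy => amal_le_pabs f (hy.trans h))

lemma amal_pabs_neg (x : F) : pabs f (-x) = pabs f x := by
  unfold pabs; rw [abs_neg]

lemma amal_pabs_zero : pabs f 0 = 0 :=
  le_antisymm (by simpa using amal_pabs_le_norm f 0) (amal_pabs_nonneg f 0)

lemma amal_pabs_add_le (a b : F) : pabs f (a + b) ≤ pabs f a + pabs f b := by
  refine amal_pabs_le f (fun y hy => ?_)
  obtain ⟨y₁, y₂, rfl, h₁, h₂⟩ := amal_riesz (abs_nonneg a) (abs_nonneg b)
    (hy.trans (abs_add_le a b))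
  rw [map_add]
  exact add_le_add (amal_le_pabs f h₁) (amal_le_pabs f h₂)

lemma amal_pabs_sub_le (a b c : F) : pabs f (a - b) ≤ pabs f (a - c) + pabs f (c - b) := by
  have : a - b = (a - c) + (c - b) := by abel
  rw [this]; exact amal_pabs_add_le f _ _

lemma amal_pabs_smul {r : ℝ} (hr : 0 < r) (x : F) : pabs f (r • x) = r * pabs f x := by
  refine le_antisymm ?_ ?_
  · refine amal_pabs_le f (fun y hy => ?_)
    have hy' : |r⁻¹ • y| ≤ |x| := by
      rw [amal_abs_smul (inv_nonneg.mpr hr.le)]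
      have := amal_smul_mono (inv_nonneg.mpr hr.le) (hy.trans_eq (amal_abs_smul hr.le x))
      rwa [inv_smul_smul₀ hr.ne'] at this
    have := amal_le_pabs f hy'
    have h2 : f y = r * f (r⁻¹ • y) := by
      rw [map_smul, smul_eq_mul, ← mul_assoc, mul_inv_cancel₀ hr.ne', one_mul]
    rw [h2]
    exact mul_le_mul_of_nonneg_left this hr.le
  · rw [← le_div_iff₀' hr]
    refine amal_pabs_le f (fun y hy => ?_)
    have hy' : |r • y| ≤ |r • x| := by
      rw [amal_abs_smul hr.le, amal_abs_smul hr.le]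
      exact amal_smul_mono hr.le hy
    have := amal_le_pabs f hy'
    rw [map_smul, smul_eq_mul] at this
    rw [le_div_iff₀' hr]
    exact this

end PabsLemmas

section Theta
variable {E F : Type*} [NormedAddCommGroup E] [Lattice E] [HasSolidNorm E] [IsOrderedAddMonoid E] [NormedSpace ℝ E]
  [NormedAddCommGroup F] [Lattice F] [HasSolidNorm F] [IsOrderedAddMonoid F] [NormedSpace ℝ F]

noncomputable def amalQ (s : Finset (F →L[ℝ] ℝ)) (w : F) : ℝ := ∑ f ∈ s, pabs f w

lemma amalQ_nonneg (s : Finset (F →L[ℝ] ℝ)) (w : F) : 0 ≤ amalQ s w :=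
  Finset.sum_nonneg (fun f _ => amal_pabs_nonneg f w)

lemma amalQ_add_le (s : Finset (F →L[ℝ] ℝ)) (a b : F) :
    amalQ s (a + b) ≤ amalQ s a + amalQ s b := by
  rw [amalQ, amalQ, amalQ, ← Finset.sum_add_distrib]
  exact Finset.sum_le_sum (fun f _ => amal_pabs_add_le f a b)

lemma amalQ_smul (s : Finset (F →L[ℝ] ℝ)) {r : ℝ} (hr : 0 < r) (w : F) :
    amalQ s (r • w) = r * amalQ s w := by
  rw [amalQ, amalQ, Finset.mul_sum]
  exact Finset.sum_congr rfl (fun f _ => amal_pabs_smul f hr w)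

lemma amal_pabs_le_amalQ {s : Finset (F →L[ℝ] ℝ)} {f : F →L[ℝ] ℝ} (hf : f ∈ s) (w : F) :
    pabs f w ≤ amalQ s w :=
  Finset.single_le_sum (fun g _ => amal_pabs_nonneg g w) hf

lemma amal_sum_abs_T_le (T : E →L[ℝ] F) :
    ∀ (l : List E) (d : F), (∀ w : E, |w| ≤ (l.map (fun z => |z|)).sum → T w ≤ d) →
    (l.map (fun z => |T z|)).sum ≤ d := by
  intro l
  induction l with
  | nil =>
    intro d hd
    simpa using hd 0 (by simp)
  | cons z t ih =>
    intro d hd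
    have habs : ∀ w : E, |w| ≤ (t.map (fun z => |z|)).sum → |w + z| ≤ ((z :: t).map (fun z => |z|)).sum := by
      intro w hw
      simp only [List.map_cons, List.sum_cons]
      calc |w + z| ≤ |w| + |z| := abs_add_le w z
      _ ≤ (t.map (fun z => |z|)).sum + |z| := add_le_add_left hw _
      _ = |z| + (t.map (fun z => |z|)).sum := by abel
    have h1 : (t.map (fun z => |T z|)).sum ≤ d - T z := by
      refine ih _ (fun w hw => ?_)
      have := hd (w + z) (habs w hw)
      rw [map_add] at this
      exact le_sub_iff_add_le.2 this
    have h2 : (t.map (fun z => |T z|)).sum ≤ d + T z := by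
      refine ih _ (fun w hw => ?_)
      have habs2 : |w + (-z)| ≤ ((z :: t).map (fun z => |z|)).sum := by
        have := habs w hw
        calc |w + -z| ≤ |w| + |-z| := abs_add_le w (-z)
        _ = |w| + |z| := by rw [abs_neg]
        _ ≤ _ := by
          simp only [List.map_cons, List.sum_cons]
          calc |w| + |z| ≤ (t.map (fun z => |z|)).sum + |z| := add_le_add_left hw _
          _ = |z| + (t.map (fun z => |z|)).sum := by abel
      have := hd (w + -z) habs2
      rw [map_add, map_neg] at this
      calc T w = T w + - T z + T z := by abel
      _ ≤ d + T z := add_le_add_left this _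
    simp only [List.map_cons, List.sum_cons]
    rw [amal_abs_def, sup_add]
    refine sup_le ?_ ?_
    · calc T z + (t.map (fun z => |T z|)).sum ≤ T z + (d - T z) := add_le_add_right h1 _
      _ = d := by abel
    · calc -T z + (t.map (fun z => |T z|)).sum ≤ -T z + (d + T z) := add_le_add_right h2 _
      _ = d := by abel

lemma amal_pabs_list_approx (f : F →L[ℝ] ℝ) :
    ∀ (lw : List F) (ε : ℝ), 0 < ε → ∃ y : F, |y| ≤ (lw.map (fun w => |w|)).sum ∧
      (lw.map (pabs f)).sum ≤ f y + ε := by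
  intro lw
  induction lw with
  | nil => intro ε hε; exact ⟨0, by simp, by simp [hε.le]⟩
  | cons w t ih =>
    intro ε hε
    obtain ⟨yt, hyt1, hyt2⟩ := ih (ε/2) (by linarith)
    obtain ⟨r, ⟨yw, hyw, rfl⟩, hr⟩ := exists_lt_of_lt_csSup (amal_pabs_ne f w)
      (show pabs f w - ε/2 < pabs f w by linarith)
    refine ⟨yw + yt, ?_, ?_⟩
    · simp only [List.map_cons, List.sum_cons]
      calc |yw + yt| ≤ |yw| + |yt| := abs_add_le _ _
      _ ≤ |w| + (t.map (fun w => |w|)).sum := by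
          exact add_le_add hyw hyt1
    · simp only [List.map_cons, List.sum_cons, map_add]
      have : pabs f w ≤ f yw + ε/2 := by linarith
      linarith
lemma amal_pabs_list_le (f : F →L[ℝ] ℝ) (lw : List F) (e : F) (he : 0 ≤ e)
    (h : (lw.map (fun w => |w|)).sum ≤ e) : (lw.map (pabs f)).sum ≤ pabs f e := by
  refine le_of_forall_pos_le_add (fun ε hε => ?_)
  obtain ⟨y, hy1, hy2⟩ := amal_pabs_list_approx f lw ε hε
  have : f y ≤ pabs f e := amal_le_pabs f (by rw [abs_of_nonneg he]; exact hy1.trans h)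
  linarith

end Theta

section Theta2
variable {E F : Type*} [NormedAddCommGroup E] [Lattice E] [HasSolidNorm E] [IsOrderedAddMonoid E] [NormedSpace ℝ E]
  [NormedAddCommGroup F] [Lattice F] [HasSolidNorm F] [IsOrderedAddMonoid F] [NormedSpace ℝ F]

variable (T : E →L[ℝ] F) (s : Finset (F →L[ℝ] ℝ))

noncomputable def amalThetaSet (x : E) : Set ℝ :=
  {r | ∃ l : List E, (l.map (fun z => |z|)).sum ≤ x ∧ (l.map (fun z => amalQ s (T z))).sum = r}

noncomputable def amalTheta (x : E) : ℝ := sSup (amalThetaSet T s x)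

/-- an order bound hypothesis on `T`. -/
def amalOB : Prop := ∀ x : E, 0 ≤ x → ∃ d : F, ∀ w : E, |w| ≤ x → T w ≤ d

lemma amal_swap (l : List E) :
    (l.map (fun z => amalQ s (T z))).sum = ∑ f ∈ s, ((l.map T).map (fun w => pabs f w)).sum := by
  induction l with
  | nil => simp
  | cons z t ih =>
    simp only [List.map_cons, List.sum_cons]
    rw [ih, amalQ, ← Finset.sum_add_distrib]

lemma amalThetaSet_zero_mem {x : E} (hx : 0 ≤ x) : 0 ∈ amalThetaSet T s x :=
  ⟨[], by simpa using hx, by simp⟩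

lemma amalThetaSet_nonempty {x : E} (hx : 0 ≤ x) : (amalThetaSet T s x).Nonempty :=
  ⟨0, amalThetaSet_zero_mem T s hx⟩

lemma amalThetaSet_bdd (hT : amalOB T) (x : E) (hx : 0 ≤ x) :
    BddAbove (amalThetaSet T s x) := by
  obtain ⟨d, hd⟩ := hT x hx
  refine ⟨∑ f ∈ s, pabs f d⁺, ?_⟩
  rintro r ⟨l, hl, rfl⟩
  rw [amal_swap]
  refine Finset.sum_le_sum (fun f _ => ?_)
  have hsum : ((l.map T).map (fun w => |w|)).sum ≤ d⁺ := by
    have h1 : (l.map (fun z => |T z|)).sum ≤ d := by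
      refine amal_sum_abs_T_le T l d (fun w hw => hd w (hw.trans hl))
    have h2 : (l.map (fun z => |T z|)).sum = ((l.map T).map (fun w => |w|)).sum := by
      rw [List.map_map]; rfl
    rw [← h2]
    exact h1.trans (le_posPart d)
  exact amal_pabs_list_le f (l.map T) d⁺ (posPart_nonneg d) hsum

lemma amalTheta_nonneg (hT : amalOB T) {x : E} (hx : 0 ≤ x) : 0 ≤ amalTheta T s x :=
  le_csSup (amalThetaSet_bdd T s hT x hx) (amalThetaSet_zero_mem T s hx)

lemma amalQ_le_amalTheta (hT : amalOB T) (z : E) : amalQ s (T z) ≤ amalTheta T s |z| :=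
  le_csSup (amalThetaSet_bdd T s hT |z| (abs_nonneg z)) ⟨[z], by simp, by simp⟩

lemma amalTheta_mono (hT : amalOB T) {x y : E} (hx : 0 ≤ x) (hxy : x ≤ y) :
    amalTheta T s x ≤ amalTheta T s y :=
  csSup_le_csSup (amalThetaSet_bdd T s hT y (hx.trans hxy))
    (amalThetaSet_nonempty T s hx)
    (by rintro r ⟨l, hl, rfl⟩; exact ⟨l, hl.trans hxy, rfl⟩)

lemma amalTheta_zero (hT : amalOB T) : amalTheta T s 0 = 0 := by
  refine le_antisymm ?_ (amalTheta_nonneg T s hT le_rfl)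
  refine csSup_le (amalThetaSet_nonempty T s le_rfl) ?_
  rintro r ⟨l, hl, rfl⟩
  have hz : ∀ z ∈ l, z = 0 := by
    intro z hz
    have h0 : |z| ≤ 0 := by
      have hle : |z| ≤ (l.map (fun z => |z|)).sum := by
        refine List.single_le_sum (fun a ha => ?_) _ (List.mem_map_of_mem hz)
        obtain ⟨b, _, rfl⟩ := List.mem_map.1 ha
        exact abs_nonneg b
      exact hle.trans hl
    have h1 : z ≤ 0 := (le_abs_self z).trans h0
    have h2 : -z ≤ 0 := (neg_le_abs z).trans h0
    exact le_antisymm h1 (neg_nonpos.1 h2)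
  have : ∀ z ∈ l, amalQ s (T z) = 0 := by
    intro z hzl
    rw [hz z hzl, map_zero, amalQ]
    exact Finset.sum_eq_zero (fun f _ => amal_pabs_zero f)
  have : (l.map (fun z => amalQ s (T z))).sum = 0 := by
    refine List.sum_eq_zero (fun r hr => ?_)
    obtain ⟨z, hzl, rfl⟩ := List.mem_map.1 hr
    exact this z hzl
  simp [this]

lemma amal_split (hT : amalOB T) :
    ∀ (l : List E) (x y : E), 0 ≤ x → 0 ≤ y → (l.map (fun z => |z|)).sum ≤ x + y →
    ∃ la lb : List E, ((la.map (fun z => |z|)).sum ≤ x) ∧ ((lb.map (fun z => |z|)).sum ≤ y) ∧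
      (l.map (fun z => amalQ s (T z))).sum ≤
        (la.map (fun z => amalQ s (T z))).sum + (lb.map (fun z => amalQ s (T z))).sum := by
  intro l
  induction l with
  | nil =>
    intro x y hx hy _
    exact ⟨[], [], by simpa using hx, by simpa using hy, by simp⟩
  | cons z t ih =>
    intro x y hx hy hl
    simp only [List.map_cons, List.sum_cons] at hl
    have hst : 0 ≤ (t.map (fun z => |z|)).sum := by
      refine List.sum_nonneg (fun a ha => ?_)
      obtain ⟨b, _, rfl⟩ := List.mem_map.1 ha
      exact abs_nonneg b
    have hzxy : |z| ≤ x + y := by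
      calc |z| ≤ |z| + (t.map (fun z => |z|)).sum := le_add_of_nonneg_right hst
      _ ≤ x + y := hl
    set x₀ := |z| ⊓ x with hx₀def
    have hx₀ : 0 ≤ x₀ := le_inf (abs_nonneg z) hx
    have hx₀x : x₀ ≤ x := inf_le_right
    have hy₀eq : |z| - x₀ = 0 ⊔ (|z| - x) := by
      rw [hx₀def, sub_inf _ _ _, sub_self]
    have hy₀ : 0 ≤ |z| - x₀ := by rw [hy₀eq]; exact le_sup_left
    have hy₀y : |z| - x₀ ≤ y := by
      rw [hy₀eq]
      exact sup_le hy (sub_le_iff_le_add.2 (hzxy.trans_eq (by abel)))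
    obtain ⟨a, b, hab, ha, hb⟩ := amal_riesz hx₀ hy₀ (le_of_eq (by abel) : |z| ≤ x₀ + (|z| - x₀))
    have htail : (t.map (fun z => |z|)).sum ≤ (x - x₀) + (y - (|z| - x₀)) := by
      have : (t.map (fun z => |z|)).sum ≤ x + y - |z| := by
        rw [le_sub_iff_add_le, add_comm]
        exact hl
      exact this.trans_eq (by abel)
    obtain ⟨la', lb', h1, h2, h3⟩ := ih (x - x₀) (y - (|z| - x₀))
      (sub_nonneg.2 hx₀x) (sub_nonneg.2 hy₀y) htail
    refine ⟨a :: la', b :: lb', ?_, ?_, ?_⟩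
    · simp only [List.map_cons, List.sum_cons]
      calc |a| + (la'.map (fun z => |z|)).sum ≤ x₀ + (x - x₀) := add_le_add ha h1
      _ = x := by abel
    · simp only [List.map_cons, List.sum_cons]
      calc |b| + (lb'.map (fun z => |z|)).sum ≤ (|z| - x₀) + (y - (|z| - x₀)) := add_le_add hb h2
      _ = y := by abel
    · simp only [List.map_cons, List.sum_cons]
      have hQ : amalQ s (T z) ≤ amalQ s (T a) + amalQ s (T b) := by
        rw [hab, map_add]
        exact amalQ_add_le s _ _
      linarith

lemma amalTheta_add (hT : amalOB T) {x y : E} (hx : 0 ≤ x) (hy : 0 ≤ y) :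
    amalTheta T s (x + y) = amalTheta T s x + amalTheta T s y := by
  refine le_antisymm ?_ ?_
  · refine csSup_le (amalThetaSet_nonempty T s (add_nonneg hx hy)) ?_
    rintro r ⟨l, hl, rfl⟩
    obtain ⟨la, lb, h1, h2, h3⟩ := amal_split T s hT l x y hx hy hl
    have ha : (la.map (fun z => amalQ s (T z))).sum ≤ amalTheta T s x :=
      le_csSup (amalThetaSet_bdd T s hT x hx) ⟨la, h1, rfl⟩
    have hb : (lb.map (fun z => amalQ s (T z))).sum ≤ amalTheta T s y :=
      le_csSup (amalThetaSet_bdd T s hT y hy) ⟨lb, h2, rfl⟩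
    linarith
  · have key : ∀ ra ∈ amalThetaSet T s x, ∀ rb ∈ amalThetaSet T s y,
        ra + rb ≤ amalTheta T s (x + y) := by
      rintro ra ⟨la, hla, rfl⟩ rb ⟨lb, hlb, rfl⟩
      refine le_csSup (amalThetaSet_bdd T s hT _ (add_nonneg hx hy)) ⟨la ++ lb, ?_, ?_⟩
      · rw [List.map_append, List.sum_append]
        exact add_le_add hla hlb
      · rw [List.map_append, List.sum_append]
    have h1 : amalTheta T s x ≤ amalTheta T s (x + y) - amalTheta T s y := by
      refine csSup_le (amalThetaSet_nonempty T s hx) (fun ra hra => ?_)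
      have h2 : amalTheta T s y ≤ amalTheta T s (x + y) - ra :=
        csSup_le (amalThetaSet_nonempty T s hy) (fun rb hrb => by
          have := key ra hra rb hrb; linarith)
      linarith
    linarith
lemma amalTheta_smul_le (hT : amalOB T) {r : ℝ} (hr : 0 < r) {x : E} (hx : 0 ≤ x) :
    amalTheta T s (r • x) ≤ r * amalTheta T s x := by
  refine csSup_le (amalThetaSet_nonempty T s (amal_smul_nonneg hr.le hx)) ?_
  rintro m ⟨l, hl, rfl⟩
  have hmem : (l.map (fun z => amalQ s (T (r⁻¹ • z)))).sum ∈ amalThetaSet T s x := by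
    refine ⟨l.map (fun z => r⁻¹ • z), ?_, by rw [List.map_map]; rfl⟩
    · have h1 : ((l.map (fun z => r⁻¹ • z)).map (fun z => |z|)).sum
          = r⁻¹ • (l.map (fun z => |z|)).sum := by
        rw [List.map_map, List.smul_sum, List.map_map]
        refine congrArg List.sum (List.map_congr_left (fun z _ => ?_))
        simp only [Function.comp_apply]
        exact amal_abs_smul (inv_nonneg.2 hr.le) z
      rw [h1]
      have := amal_smul_mono (inv_nonneg.2 hr.le) hl
      rwa [inv_smul_smul₀ hr.ne'] at this
  have hval : (l.map (fun z => amalQ s (T z))).sum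
      = r * (l.map (fun z => amalQ s (T (r⁻¹ • z)))).sum := by
    rw [← List.sum_map_mul_left]
    refine congrArg List.sum (List.map_congr_left (fun z _ => ?_))
    rw [← amalQ_smul s hr, ← map_smul, smul_inv_smul₀ hr.ne']
  rw [hval]
  exact mul_le_mul_of_nonneg_left (le_csSup (amalThetaSet_bdd T s hT x hx) hmem) hr.le

lemma amalTheta_smul (hT : amalOB T) {r : ℝ} (hr : 0 < r) {x : E} (hx : 0 ≤ x) :
    amalTheta T s (r • x) = r * amalTheta T s x := by
  refine le_antisymm (amalTheta_smul_le T s hT hr hx) ?_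
  have h2 := amalTheta_smul_le T s hT (inv_pos.2 hr) (amal_smul_nonneg hr.le hx)
  rw [inv_smul_smul₀ hr.ne'] at h2
  calc r * amalTheta T s x ≤ r * (r⁻¹ * amalTheta T s (r • x)) :=
        mul_le_mul_of_nonneg_left h2 hr.le
  _ = amalTheta T s (r • x) := by field_simp

end Theta2

section Phi
variable {E F : Type*} [NormedAddCommGroup E] [Lattice E] [HasSolidNorm E] [IsOrderedAddMonoid E] [NormedSpace ℝ E]
  [NormedAddCommGroup F] [Lattice F] [HasSolidNorm F] [IsOrderedAddMonoid F] [NormedSpace ℝ F]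
variable (T : E →L[ℝ] F) (s : Finset (F →L[ℝ] ℝ))

noncomputable def amalPhi0 : E → ℝ := fun x => amalTheta T s x⁺ - amalTheta T s x⁻

lemma amalPhi0_eq_sub (hT : amalOB T) {a b : E} (ha : 0 ≤ a) (hb : 0 ≤ b) :
    amalPhi0 T s (a - b) = amalTheta T s a - amalTheta T s b := by
  have h1 : (a-b)⁺ = (a - b) + (a-b)⁻ :=
    sub_eq_iff_eq_add.mp (posPart_sub_negPart (a-b))
  have key : (a-b)⁺ + b = (a-b)⁻ + a := by rw [h1]; abel
  have h2 : amalTheta T s ((a-b)⁺) + amalTheta T s b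
      = amalTheta T s ((a-b)⁻) + amalTheta T s a := by
    rw [← amalTheta_add T s hT (posPart_nonneg _) hb,
        ← amalTheta_add T s hT (negPart_nonneg _) ha, key]
  unfold amalPhi0
  linarith

lemma amalPhi0_add (hT : amalOB T) (x y : E) :
    amalPhi0 T s (x + y) = amalPhi0 T s x + amalPhi0 T s y := by
  have hxy : x + y = (x⁺ + y⁺) - (x⁻ + y⁻) := by
    nth_rewrite 1 [← posPart_sub_negPart x, ← posPart_sub_negPart y]
    abel
  rw [hxy, amalPhi0_eq_sub T s hT (add_nonneg (posPart_nonneg x) (posPart_nonneg y))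
      (add_nonneg (negPart_nonneg x) (negPart_nonneg y)),
    amalTheta_add T s hT (posPart_nonneg x) (posPart_nonneg y),
    amalTheta_add T s hT (negPart_nonneg x) (negPart_nonneg y)]
  unfold amalPhi0
  ring

lemma amalPhi0_neg (x : E) : amalPhi0 T s (-x) = - amalPhi0 T s x := by
  unfold amalPhi0
  rw [posPart_neg, negPart_neg]
  ring

lemma amalPhi0_smul (hT : amalOB T) (c : ℝ) (x : E) :
    amalPhi0 T s (c • x) = c * amalPhi0 T s x := by
  rcases lt_trichotomy c 0 with h | h | h
  · have hrw : c • x = -((-c) • x) := by rw [neg_smul, neg_neg]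
    have hpos : amalPhi0 T s ((-c) • x) = (-c) * amalPhi0 T s x := by
      unfold amalPhi0
      rw [amal_smul_posPart (by linarith) x]
      rw [show ((-c) • x)⁻ = (-c) • x⁻ by
        rw [← posPart_neg, ← smul_neg, amal_smul_posPart (by linarith), posPart_neg]]
      rw [amalTheta_smul T s hT (by linarith) (posPart_nonneg x),
        amalTheta_smul T s hT (by linarith) (negPart_nonneg x)]
      ring
    rw [hrw, amalPhi0_neg, hpos]
    ring
  · subst h
    simp only [zero_smul, zero_mul]
    unfold amalPhi0
    simp [amalTheta_zero T s hT]
  · unfold amalPhi0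
    rw [amal_smul_posPart h.le x]
    rw [show (c • x)⁻ = c • x⁻ by
      rw [← posPart_neg, ← smul_neg, amal_smul_posPart h.le, posPart_neg]]
    rw [amalTheta_smul T s hT h (posPart_nonneg x),
      amalTheta_smul T s hT h (negPart_nonneg x)]
    ring

lemma amalPhi0_bound (hT : amalOB T) (x : E) : |amalPhi0 T s x| ≤ amalTheta T s |x| := by
  have hpa : ∀ z : E, z⁺ ≤ |z| := by
    intro z
    rw [posPart_def, amal_abs_def]
    exact sup_le le_sup_left (by rw [← amal_abs_def]; exact abs_nonneg z)
  have h1 : x⁺ ≤ |x| := hpa x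
  have h2 : x⁻ ≤ |x| := by
    rw [← posPart_neg, ← abs_neg]
    exact hpa (-x)
  have b1 : amalTheta T s x⁺ ≤ amalTheta T s |x| := amalTheta_mono T s hT (posPart_nonneg x) h1
  have b2 : amalTheta T s x⁻ ≤ amalTheta T s |x| := amalTheta_mono T s hT (negPart_nonneg x) h2
  have n1 : 0 ≤ amalTheta T s x⁺ := amalTheta_nonneg T s hT (posPart_nonneg x)
  have n2 : 0 ≤ amalTheta T s x⁻ := amalTheta_nonneg T s hT (negPart_nonneg x)
  rw [abs_le]
  unfold amalPhi0
  constructor <;> linarith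

lemma amalTheta_bound [CompleteSpace E] (hT : amalOB T) :
    ∃ C : ℝ, 0 ≤ C ∧ ∀ x : E, 0 ≤ x → amalTheta T s x ≤ C * ‖x‖ := by
  by_contra h
  have h' : ∀ C : ℝ, ∃ x : E, 0 ≤ x ∧ C * ‖x‖ < amalTheta T s x := by
    intro C
    by_contra hC
    push_neg at hC
    exact h ⟨max C 0, le_max_right _ _, fun x hx => (hC x hx).trans
      (mul_le_mul_of_nonneg_right (le_max_left _ _) (norm_nonneg x))⟩
  choose x0 hx0 hxθ using fun n : ℕ => h' ((4:ℝ)^n)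
  have hxne : ∀ n, x0 n ≠ 0 := by
    intro n h0
    have := hxθ n
    rw [h0] at this
    simp [amalTheta_zero T s hT] at this
  have hnpos : ∀ n, (0:ℝ) < ‖x0 n‖ := fun n => norm_pos_iff.2 (hxne n)
  have hypos : ∀ n, (0:ℝ) < (2:ℝ)^n * ‖x0 n‖ := fun n => mul_pos (by positivity) (hnpos n)
  set y : ℕ → E := fun n => (((2:ℝ)^n * ‖x0 n‖)⁻¹) • x0 n with hy
  have hynorm : ∀ n, ‖y n‖ = ((2:ℝ)⁻¹)^n := by
    intro n
    rw [hy]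
    simp only [norm_smul, Real.norm_eq_abs, abs_of_pos (inv_pos.2 (hypos n))]
    have hc : ‖x0 n‖ ≠ 0 := (hnpos n).ne'
    rw [mul_inv, mul_assoc, inv_mul_cancel₀ hc, mul_one, inv_pow]
  have hsum : Summable y := by
    refine Summable.of_norm_bounded (summable_geometric_of_lt_one
      (by norm_num : (0:ℝ) ≤ 2⁻¹) (by norm_num : (2⁻¹:ℝ) < 1)) ?_
    intro n; rw [hynorm n]
  have hyn : ∀ n, 0 ≤ y n := fun n => amal_smul_nonneg (inv_pos.2 (hypos n)).le (hx0 n)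
  have hS : ∀ n, y n ≤ ∑' k, y k := fun n => Summable.le_tsum hsum n (fun j _ => hyn j)
  have hS0 : (0:E) ≤ ∑' k, y k := tsum_nonneg hyn
  have hθy : ∀ n, (2:ℝ)^n < amalTheta T s (y n) := by
    intro n
    rw [hy]
    rw [amalTheta_smul T s hT (inv_pos.2 (hypos n)) (hx0 n)]
    have step := mul_lt_mul_of_pos_left (hxθ n) (inv_pos.2 (hypos n))
    calc (2:ℝ)^n = ((2:ℝ)^n * ‖x0 n‖)⁻¹ * ((4:ℝ)^n * ‖x0 n‖) := by
          rw [show (4:ℝ)^n = (2:ℝ)^n * (2:ℝ)^n by rw [← mul_pow]; norm_num]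
          have hc : ‖x0 n‖ ≠ 0 := (hnpos n).ne'
          have h2 : ((2:ℝ)^n) ≠ 0 := by positivity
          field_simp
    _ < _ := step
  have hθS : ∀ n, (2:ℝ)^n < amalTheta T s (∑' k, y k) :=
    fun n => (hθy n).trans_le (amalTheta_mono T s hT (hyn n) (hS n))
  obtain ⟨n, hn⟩ := pow_unbounded_of_one_lt (amalTheta T s (∑' k, y k)) (by norm_num : (1:ℝ) < 2)
  exact absurd (hθS n) (not_lt.2 hn.le)

noncomputable def amalPhiLin (hT : amalOB T) : E →ₗ[ℝ] ℝ where
  toFun := amalPhi0 T s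
  map_add' := amalPhi0_add T s hT
  map_smul' := fun c x => amalPhi0_smul T s hT c x

noncomputable def amalPhi [CompleteSpace E] (hT : amalOB T) : E →L[ℝ] ℝ :=
  (amalPhiLin T s hT).mkContinuousOfExistsBound (by
    obtain ⟨C, hC0, hC⟩ := amalTheta_bound T s hT
    refine ⟨C, fun x => ?_⟩
    calc ‖amalPhiLin T s hT x‖ = |amalPhi0 T s x| := rfl
    _ ≤ amalTheta T s |x| := amalPhi0_bound T s hT x
    _ ≤ C * ‖(|x|)‖ := hC |x| (abs_nonneg x)
    _ = C * ‖x‖ := by rw [norm_abs_eq_norm])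

lemma amalPhi_apply [CompleteSpace E] (hT : amalOB T) (x : E) :
    amalPhi T s hT x = amalPhi0 T s x := rfl

lemma amalPhi_eq_theta [CompleteSpace E] (hT : amalOB T) {x : E} (hx : 0 ≤ x) :
    amalPhi T s hT x = amalTheta T s x := by
  rw [amalPhi_apply]
  unfold amalPhi0
  rw [posPart_of_nonneg hx, negPart_eq_zero.2 hx, amalTheta_zero T s hT]
  ring

lemma amalPhi_nonneg [CompleteSpace E] (hT : amalOB T) {x : E} (hx : 0 ≤ x) :
    0 ≤ amalPhi T s hT x := by
  rw [amalPhi_eq_theta T s hT hx]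
  exact amalTheta_nonneg T s hT hx

lemma amalPhi_mono [CompleteSpace E] (hT : amalOB T) {a b : E} (hab : a ≤ b) :
    amalPhi T s hT a ≤ amalPhi T s hT b := by
  have := amalPhi_nonneg T s hT (sub_nonneg.2 hab)
  rw [map_sub] at this
  linarith

lemma amalQ_le_amalPhi [CompleteSpace E] (hT : amalOB T) (z : E) :
    amalQ s (T z) ≤ amalPhi T s hT |z| := by
  rw [amalPhi_eq_theta T s hT (abs_nonneg z)]
  exact amalQ_le_amalTheta T s hT z

end Phi


section StepA
variable {E : Type*} [NormedAddCommGroup E] [Lattice E] [HasSolidNorm E] [IsOrderedAddMonoid E] [NormedSpace ℝ E] [CompleteSpace E]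

lemma amal_posPart_sub_le (α β γ : E) (hγ : 0 ≤ γ) : (α - β)⁺ ≤ (α - β - γ)⁺ + γ := by
  rw [posPart_def]
  refine sup_le ?_ (le_add_of_nonneg_left (posPart_nonneg _) |>.trans' hγ)
  calc α - β = (α - β - γ) + γ := by abel
  _ ≤ (α - β - γ)⁺ + γ := add_le_add_left (le_posPart _) γ

lemma amal_stepA (φ : E →L[ℝ] ℝ) (hφmono : ∀ {a b : E}, a ≤ b → φ a ≤ φ b)
    (A : Set E) (hA : DisjointlyWeaklyCompact A) {δ : ℝ} (hδ : 0 < δ) :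
    ∃ u : E, 0 ≤ u ∧ ∀ x ∈ A, φ ((|x| - u)⁺) ≤ δ := by
  by_contra hcon
  push_neg at hcon
  have hstep : ∀ u : E, ∃ x, x ∈ A ∧ δ < φ ((|x| - u⁺)⁺) := by
    intro u
    obtain ⟨x, hx1, hx2⟩ := hcon u⁺ (posPart_nonneg u)
    exact ⟨x, hx1, hx2⟩
  let F0 : ℕ → E × E := fun n => Nat.rec
      (⟨Classical.choose (hstep 0), |Classical.choose (hstep 0)|⟩ : E × E)
      (fun n p => ⟨Classical.choose (hstep ((4:ℝ)^(n+1) • p.2)),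
        p.2 + |Classical.choose (hstep ((4:ℝ)^(n+1) • p.2))|⟩) n
  let a : ℕ → E := fun n => (F0 n).1
  let S : ℕ → E := fun n => (F0 n).2
  have ha0 : a 0 = Classical.choose (hstep 0) := rfl
  have haS : ∀ n, a (n+1) = Classical.choose (hstep ((4:ℝ)^(n+1) • S n)) := fun n => rfl
  have hS0 : S 0 = |a 0| := rfl
  have hSsucc : ∀ n, S (n+1) = S n + |a (n+1)| := fun n => rfl
  have hSnn : ∀ n, 0 ≤ S n := by
    intro n; induction n with
    | zero => rw [hS0]; exact abs_nonneg _
    | succ n ih => rw [hSsucc]; exact add_nonneg ih (abs_nonneg _)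
  have hmem : ∀ n, a n ∈ A := by
    intro n
    cases n with
    | zero => exact (Classical.choose_spec (hstep 0)).1
    | succ n => rw [haS n]; exact (Classical.choose_spec (hstep ((4:ℝ)^(n+1) • S n))).1
  have hgt : ∀ n, δ < φ ((|a (n+1)| - (4:ℝ)^(n+1) • S n)⁺) := by
    intro n
    have hu : (0:E) ≤ (4:ℝ)^(n+1) • S n := amal_smul_nonneg (by positivity) (hSnn n)
    have h2 := (Classical.choose_spec (hstep ((4:ℝ)^(n+1) • S n))).2
    rw [← haS n] at h2
    have h3 : (|a (n+1)| - ((4:ℝ)^(n+1) • S n)⁺)⁺ = (|a (n+1)| - (4:ℝ)^(n+1) • S n)⁺ := by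
      rw [posPart_of_nonneg hu]
    rw [h3] at h2
    exact h2
  have habsS : ∀ k n, k ≤ n → |a k| ≤ S n := by
    intro k n hkn
    induction n with
    | zero =>
      interval_cases k
      · rw [hS0]
    | succ n ih =>
      rw [hSsucc]
      rcases Nat.lt_or_ge k (n+1) with h | h
      · exact (ih (by omega)).trans (le_add_of_nonneg_right (abs_nonneg _))
      · have : k = n + 1 := by omega
        subst this
        exact le_add_of_nonneg_left (hSnn n)
  obtain ⟨M, hM⟩ := isBounded_iff_forall_norm_le.mp hA.1
  have hM0 : 0 ≤ M := (norm_nonneg (a 0)).trans (hM _ (hmem 0))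
  have hwsum : Summable (fun k : ℕ => ((2:ℝ)⁻¹)^k • |a k|) := by
    refine Summable.of_norm_bounded (g := fun k => ((2:ℝ)⁻¹)^k * M)
      ((summable_geometric_of_lt_one (by norm_num) (by norm_num)).mul_right M) ?_
    intro k
    rw [norm_smul, Real.norm_eq_abs, abs_of_nonneg (by positivity), norm_abs_eq_norm]
    exact mul_le_mul_of_nonneg_left (hM _ (hmem k)) (by positivity)
  set w : E := ∑' k, ((2:ℝ)⁻¹)^k • |a k| with hw
  have hw_ge : ∀ m, ((2:ℝ)⁻¹)^m • |a m| ≤ w :=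
    fun m => Summable.le_tsum hwsum m (fun j _ => amal_smul_nonneg (by positivity) (abs_nonneg _))
  have hw0 : 0 ≤ w :=
    tsum_nonneg (fun j => amal_smul_nonneg (by positivity) (abs_nonneg _))
  set d : ℕ → E := fun n => (|a (n+1)| - (4:ℝ)^(n+1) • S n - ((2:ℝ)⁻¹)^n • w)⁺ with hd
  have hd0 : ∀ n, 0 ≤ d n := fun n => posPart_nonneg _
  have hdle : ∀ n, d n ≤ |a (n+1)| := by
    intro n
    have h1 : |a (n+1)| - (4:ℝ)^(n+1) • S n - ((2:ℝ)⁻¹)^n • w ≤ |a (n+1)| := by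
      have b1 : (0:E) ≤ (4:ℝ)^(n+1) • S n := amal_smul_nonneg (by positivity) (hSnn n)
      have b2 : (0:E) ≤ ((2:ℝ)⁻¹)^n • w := amal_smul_nonneg (by positivity) hw0
      calc |a (n+1)| - (4:ℝ)^(n+1) • S n - ((2:ℝ)⁻¹)^n • w
          ≤ |a (n+1)| - (4:ℝ)^(n+1) • S n := sub_le_self _ b2
      _ ≤ |a (n+1)| := sub_le_self _ b1
    calc d n ≤ (|a (n+1)|)⁺ := posPart_mono h1
    _ = |a (n+1)| := posPart_of_nonneg (abs_nonneg _)
  have hsol : ∀ n, d n ∈ SolidHull A := by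
    intro n
    exact ⟨a (n+1), hmem (n+1), by
      rw [abs_of_nonneg (hd0 n), ← abs_abs (a (n+1))]
      exact (hdle n).trans_eq (abs_abs _).symm⟩
  have haux : ∀ {n m}, n < m → d n ⊓ d m = 0 := by
    intro n m hnm
    set p := |a (n+1)| with hp
    set q := |a (m+1)| with hq
    set c := ((2:ℝ)⁻¹)^n * ((2:ℝ)⁻¹)^(m+1) with hc
    set lam := (4:ℝ)^(m+1) with hlam
    have hc0 : 0 < c := by positivity
    have hc1 : c ≤ 1 := by
      rw [hc]
      have h1 : ((2:ℝ)⁻¹)^n ≤ 1 := pow_le_one₀ (by norm_num) (by norm_num)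
      have h2 : ((2:ℝ)⁻¹)^(m+1) ≤ 1 := pow_le_one₀ (by norm_num) (by norm_num)
      nlinarith [pow_nonneg (by norm_num : (0:ℝ) ≤ 2⁻¹) n,
        pow_nonneg (by norm_num : (0:ℝ) ≤ 2⁻¹) (m+1)]
    have hclam : 1 ≤ c * lam := by
      have hpow : (2:ℝ)^n ≤ (2:ℝ)^(m+1) := by
        refine pow_le_pow_right₀ (by norm_num) (by omega)
      have e : c * lam = (2:ℝ)^(m+1) / (2:ℝ)^n := by
        rw [hc, hlam, inv_pow, inv_pow,
          show (4:ℝ)^(m+1) = 2^(m+1)*2^(m+1) by rw [← mul_pow]; norm_num]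
        field_simp
      rw [e]
      exact (one_le_div (by positivity)).2 hpow
    have h1 : d n ≤ (p - c • q)⁺ := by
      refine posPart_mono ?_
      have hcq : c • q ≤ (4:ℝ)^(n+1) • S n + ((2:ℝ)⁻¹)^n • w := by
        have h2 : ((2:ℝ)⁻¹)^(m+1) • q ≤ w := hw_ge (m+1)
        have h3 : c • q = ((2:ℝ)⁻¹)^n • (((2:ℝ)⁻¹)^(m+1) • q) := by
          rw [smul_smul, hc]
        calc c • q = ((2:ℝ)⁻¹)^n • (((2:ℝ)⁻¹)^(m+1) • q) := h3
        _ ≤ ((2:ℝ)⁻¹)^n • w := amal_smul_mono (by positivity) h2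
        _ ≤ (4:ℝ)^(n+1) • S n + ((2:ℝ)⁻¹)^n • w :=
            le_add_of_nonneg_left (amal_smul_nonneg (by positivity) (hSnn n))
      calc |a (n+1)| - (4:ℝ)^(n+1) • S n - ((2:ℝ)⁻¹)^n • w
          = p - ((4:ℝ)^(n+1) • S n + ((2:ℝ)⁻¹)^n • w) := by rw [hp]; abel
      _ ≤ p - c • q := sub_le_sub_left hcq p
    have h2 : d m ≤ (q - lam • p)⁺ := by
      refine posPart_mono ?_
      have hlp : lam • p ≤ (4:ℝ)^(m+1) • S m + ((2:ℝ)⁻¹)^m • w := by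
        have h3 : p ≤ S m := habsS (n+1) m (by omega)
        calc lam • p = (4:ℝ)^(m+1) • p := by rw [hlam]
        _ ≤ (4:ℝ)^(m+1) • S m := amal_smul_mono (by positivity) h3
        _ ≤ (4:ℝ)^(m+1) • S m + ((2:ℝ)⁻¹)^m • w :=
            le_add_of_nonneg_right (amal_smul_nonneg (by positivity) hw0)
      calc |a (m+1)| - (4:ℝ)^(m+1) • S m - ((2:ℝ)⁻¹)^m • w
          = q - ((4:ℝ)^(m+1) • S m + ((2:ℝ)⁻¹)^m • w) := by rw [hq]; abel
      _ ≤ q - lam • p := sub_le_sub_left hlp q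
    set r := d n ⊓ d m with hr
    have hr0 : 0 ≤ r := le_inf (hd0 n) (hd0 m)
    have hra : r ≤ (p - c • q)⁺ := inf_le_left.trans h1
    have hrb : r ≤ (q - lam • p)⁺ := inf_le_right.trans h2
    have step1 : c • r ≤ (p - c • q)⁺ := by
      have hX : c • ((p - c • q)⁺) ≤ (p - c • q)⁺ := by
        have h := amal_smul_nonneg (sub_nonneg.2 hc1) (posPart_nonneg (p - c • q))
        rw [sub_smul, one_smul] at h
        exact sub_nonneg.1 h
      exact (amal_smul_mono hc0.le hra).trans hX
    have step2 : c • r ≤ (p - c • q)⁻ := by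
      have hX : c • ((q - lam • p)⁺) ≤ (p - c • q)⁻ := by
        have he : c • ((q - lam • p)⁺) = (c • q - (c * lam) • p)⁺ := by
          rw [← amal_smul_posPart hc0.le, smul_sub, smul_smul]
        rw [he]
        have hstep : c • q - (c * lam) • p ≤ c • q - p := by
          refine sub_le_sub_left ?_ _
          have h := amal_smul_nonneg (sub_nonneg.2 hclam) (abs_nonneg (a (n+1)))
          rw [sub_smul, one_smul] at h
          exact sub_nonneg.1 h
        calc (c • q - (c * lam) • p)⁺ ≤ (c • q - p)⁺ := posPart_mono hstep
        _ = (-(p - c • q))⁺ := by rw [neg_sub]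
        _ = (p - c • q)⁻ := posPart_neg _
      exact (amal_smul_mono hc0.le hrb).trans hX
    have hcr : c • r ≤ 0 := by
      have := le_inf step1 step2
      rwa [posPart_inf_negPart_eq_zero] at this
    have : r ≤ 0 := by
      have h := amal_smul_mono (inv_pos.2 hc0).le hcr
      rwa [inv_smul_smul₀ hc0.ne', smul_zero] at h
    exact le_antisymm this hr0
  have hdisj : DisjointSeq d := by
    intro m n hmn
    unfold LatDisjoint
    rw [abs_of_nonneg (hd0 m), abs_of_nonneg (hd0 n)]
    rcases Nat.lt_or_ge m n with h | h
    · exact haux h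
    · have : n < m := by omega
      rw [inf_comm]
      exact haux this
  have hwn : WeaklyNull d := hA.2 d hsol hdisj
  have hφd : Tendsto (fun n => φ (d n)) atTop (𝓝 0) := hwn φ
  have hlow : ∀ n, δ < φ (d n) + ((2:ℝ)⁻¹)^n * φ w := by
    intro n
    have hsplit : (|a (n+1)| - (4:ℝ)^(n+1) • S n)⁺ ≤ d n + ((2:ℝ)⁻¹)^n • w :=
      amal_posPart_sub_le _ _ _ (amal_smul_nonneg (by positivity) hw0)
    have := (hgt n).trans_le (hφmono hsplit)
    rwa [map_add, map_smul, smul_eq_mul] at this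
  have hgeo : Tendsto (fun n : ℕ => ((2:ℝ)⁻¹)^n * φ w) atTop (𝓝 0) := by
    have := (tendsto_pow_atTop_nhds_zero_of_lt_one (by norm_num : (0:ℝ) ≤ 2⁻¹)
      (by norm_num : (2⁻¹:ℝ) < 1)).mul_const (φ w)
    simpa using this
  have hcomb : Tendsto (fun n => φ (d n) + ((2:ℝ)⁻¹)^n * φ w) atTop (𝓝 0) := by
    have := hφd.add hgeo
    simpa using this
  obtain ⟨n, hn⟩ := (hcomb.eventually (gt_mem_nhds hδ)).exists
  exact absurd (hlow n) (not_lt.2 hn.le)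

end StepA



theorem stmt16 {E F : Type*} [NormedAddCommGroup E] [Lattice E] [HasSolidNorm E] [IsOrderedAddMonoid E] [NormedSpace ℝ E] [CompleteSpace E] [NormedAddCommGroup F] [Lattice F] [HasSolidNorm F] [IsOrderedAddMonoid F] [NormedSpace ℝ F] [CompleteSpace F]
    (T : E →L[ℝ] F) (h1 : OrderBoundedOp T) (h2 : AMALCompact T)
    (A : Set E) (hA : DisjointlyWeaklyCompact A) : AWTotallyBounded (T '' A) := by
  classical
  intro ε hε s
  have hOB : amalOB T := by
    intro x hx
    obtain ⟨c, dd, hcd⟩ := h1 (-x) x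
    refine ⟨dd, fun w hw => ?_⟩
    have hmem : w ∈ Set.Icc (-x) x := by
      constructor
      · exact neg_le.1 ((neg_le_abs w).trans hw)
      · exact (le_abs_self w).trans hw
    exact (hcd ⟨w, hmem, rfl⟩).2
  set φ := amalPhi T s hOB with hφ
  have hφmono : ∀ {a b : E}, a ≤ b → φ a ≤ φ b := fun hab => amalPhi_mono T s hOB hab
  have hkey : ∀ z : E, ∀ f ∈ s, pabs f (T z) ≤ φ |z| := fun z f hf =>
    (amal_pabs_le_amalQ hf (T z)).trans (amalQ_le_amalPhi T s hOB z)
  obtain ⟨u, hu0, hustep⟩ := amal_stepA φ hφmono A hA (δ := ε/8) (by linarith)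
  obtain ⟨Ψ, hΨsub, hΨcover⟩ := h2 u hu0 (ε/8) (by linarith) s
  -- for each a ∈ A, the truncation estimate
  have htrunc : ∀ a ∈ A, ∀ f ∈ s, pabs f (T a - T ((a ⊔ -u) ⊓ u)) ≤ ε/8 := by
    intro a ha f hf
    have e1 : T a - T ((a ⊔ -u) ⊓ u) = T (a - (a ⊔ -u) ⊓ u) := (map_sub T _ _).symm
    rw [e1]
    refine (hkey _ f hf).trans ?_
    have e2 : φ |a - (a ⊔ -u) ⊓ u| ≤ φ ((|a| - u)⁺) := hφmono (by
      have := amal_trunc_sub hu0 a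
      calc |a - (a ⊔ -u) ⊓ u| = |(a - (a ⊔ -u) ⊓ u)| := rfl
      _ ≤ (|a| - u)⁺ := this)
    exact e2.trans (hustep a ha)
  have hvmem : ∀ a : E, (a ⊔ -u) ⊓ u ∈ Set.Icc (-u) u := by
    intro a
    exact ⟨le_inf le_sup_right ((neg_nonpos.2 hu0).trans hu0), inf_le_right⟩
  -- the "good" predicate
  set good : F → Prop := fun c => ∃ b ∈ A, ∀ f ∈ s, pabs f (T b - c) < ε/8 + ε/8 with hgood
  have hcover : ∀ a ∈ A, ∃ c ∈ Ψ, (∀ f ∈ s, pabs f (T a - c) < ε/8 + ε/8) := by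
    intro a ha
    obtain ⟨c, hcΨ, hc⟩ := hΨcover (T ((a ⊔ -u) ⊓ u)) ⟨(a ⊔ -u) ⊓ u, hvmem a, rfl⟩
    refine ⟨c, hcΨ, fun f hf => ?_⟩
    calc pabs f (T a - c) ≤ pabs f (T a - T ((a ⊔ -u) ⊓ u)) + pabs f (T ((a ⊔ -u) ⊓ u) - c) :=
          amal_pabs_sub_le f _ _ _
    _ < ε/8 + ε/8 := by
        have := htrunc a ha f hf
        have h2 := hc f hf
        linarith
  -- choose witnesses
  have hgoodmem : ∀ {c : F}, c ∈ Ψ.filter good → good c :=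
    fun h => (Finset.mem_filter.1 h).2
  set Φ : Finset F := (Ψ.filter good).attach.image
    (fun c => T (Classical.choose (hgoodmem c.2))) with hΦ
  refine ⟨Φ, ?_, ?_⟩
  · rw [hΦ]
    intro y hy
    simp only [Finset.coe_image, Set.mem_image, Finset.mem_coe, Finset.mem_attach] at hy
    obtain ⟨c, _, rfl⟩ := hy
    have hspec := Classical.choose_spec (hgoodmem c.2)
    exact ⟨_, hspec.1, rfl⟩
  · rintro x ⟨a, ha, rfl⟩
    obtain ⟨c, hcΨ, hc⟩ := hcover a ha
    have hgc : good c := ⟨a, ha, hc⟩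
    have hcfilter : c ∈ Ψ.filter good := Finset.mem_filter.2 ⟨hcΨ, hgc⟩
    refine ⟨T (Classical.choose (hgoodmem hcfilter)), ?_, ?_⟩
    · rw [hΦ]
      exact Finset.mem_image.2 ⟨⟨c, hcfilter⟩, Finset.mem_attach _ _, rfl⟩
    · set b := Classical.choose (hgoodmem hcfilter) with hb
      have hspec := Classical.choose_spec (hgoodmem hcfilter)
      intro f hf
      have h3 : pabs f (c - T b) < ε/8 + ε/8 := by
        rw [show c - T b = -(T b - c) by abel, amal_pabs_neg]
        exact hspec.2 f hf
      calc pabs f (T a - T b) ≤ pabs f (T a - c) + pabs f (c - T b) := amal_pabs_sub_le f _ _ _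
      _ < (ε/8 + ε/8) + (ε/8 + ε/8) := by
          have := hc f hf
          linarith
      _ < ε := by linarith


end
end
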